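/- arXiv:1706.04537 — 4 statements merged into one kernel-verified Lean document; each statement's English description precedes it below -/
import Mathlib

section
/- Let G be a finite simple graph and vw an edge of G. Then vw is exposed if and only if the common open neighborhood N_G(v) ∩ N_G(w) is a nonempty clique in G. -/
variable {V : Type*}

/-- A maximal clique of `G`: a clique not properly contained in any other clique. -/
def IsMaxClique (G : SimpleGraph V) (s : Set V) : Prop :=
  G.IsClique s ∧ ∀ t : Set V, G.IsClique t → s ⊆ t → t = s

/-- `xy` is a facet edge of `G` if it is an edge and `{x, y}` is a maximal clique. -/
def IsFacetEdge (G : SimpleGraph V) (x y : V) : Prop :=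
  G.Adj x y ∧ IsMaxClique G {x, y}

/-- `xy` is an exposed edge of `G` if it is an edge contained in a unique maximal
clique and it is not a facet edge. -/
def IsExposedEdge (G : SimpleGraph V) (x y : V) : Prop :=
  G.Adj x y ∧ (∃! s : Set V, IsMaxClique G s ∧ x ∈ s ∧ y ∈ s) ∧ ¬ IsFacetEdge G x y

/-- A graph is chordal if every cycle of length at least four has a chord, i.e. an
edge of the graph joining two vertices of the cycle which is not an edge of the cycle. -/
def IsChordal (G : SimpleGraph V) : Prop :=
  ∀ ⦃v : V⦄ (w : G.Walk v v), w.IsCycle → 4 ≤ w.length →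
    ∃ a b, a ∈ w.support ∧ b ∈ w.support ∧ G.Adj a b ∧ s(a, b) ∉ w.edges

/-- `H` is obtained from `G` through an erasure: deletion of a single exposed edge. -/
def Erasure (G H : SimpleGraph V) : Prop :=
  ∃ x y : V, IsExposedEdge G x y ∧ H = G.deleteEdges {s(x, y)}


lemma exists_maxClique_superset [Fintype V] (G : SimpleGraph V) {s : Set V}
    (hs : G.IsClique s) : ∃ t, IsMaxClique G t ∧ s ⊆ t := by
  obtain ⟨t, ⟨ht, hst⟩, hmax⟩ := Set.Finite.exists_maximalFor id
    {t : Set V | G.IsClique t ∧ s ⊆ t} (Set.toFinite _) ⟨s, hs, subset_rfl⟩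
  exact ⟨t, ⟨ht, fun u hu htu => le_antisymm (hmax ⟨hu, hst.trans htu⟩ htu) htu⟩, hst⟩

/-- An edge `vw` is exposed if and only if the common open neighborhood
`N_G(v) ∩ N_G(w)` is a nonempty clique in `G`. -/
theorem isExposedEdge_iff_commonNeighborhood [Fintype V] (G : SimpleGraph V)
    (v w : V) (hvw : G.Adj v w) :
    IsExposedEdge G v w ↔
      (G.neighborSet v ∩ G.neighborSet w).Nonempty ∧
        G.IsClique (G.neighborSet v ∩ G.neighborSet w) := by
  set N := G.neighborSet v ∩ G.neighborSet w with hN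
  have hne : v ≠ w := hvw.ne
  constructor
  · rintro ⟨hadj, ⟨s, ⟨⟨hscl, hsmax⟩, hvs, hws⟩, huniq⟩, hnf⟩
    have hmem : ∀ u, u ∈ N → u ∈ s := by
      rintro u ⟨huv, huw⟩
      have huv' : G.Adj v u := huv
      have huw' : G.Adj w u := huw
      have hc : G.IsClique {v, w, u} := by
        intro a ha b hb hab
        simp only [Set.mem_insert_iff, Set.mem_singleton_iff] at ha hb
        rcases ha with rfl|rfl|rfl <;> rcases hb with rfl|rfl|rfl <;>
          first
            | exact absurd rfl hab
            | assumption
            | exact hadj.symm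
            | exact huv'.symm
            | exact huw'.symm
      obtain ⟨t, htmax, hsub⟩ := exists_maxClique_superset G hc
      have := huniq t ⟨htmax, hsub (by simp), hsub (by simp)⟩
      rw [← this]
      exact hsub (by simp)
    have hssub : ({v, w} : Set V) ⊆ s := by
      rintro x (rfl|rfl)
      · exact hvs
      · exact hws
    have hsne : s ≠ {v, w} := by
      rintro rfl
      exact hnf ⟨hadj, hscl, hsmax⟩
    obtain ⟨u, hus, hunotvw⟩ : ∃ u ∈ s, u ∉ ({v, w} : Set V) := by
      by_contra h
      push_neg at h
      exact hsne (Set.Subset.antisymm h hssub)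
    simp only [Set.mem_insert_iff, Set.mem_singleton_iff, not_or] at hunotvw
    have huN : u ∈ N := ⟨hscl hvs hus (Ne.symm hunotvw.1), hscl hws hus (Ne.symm hunotvw.2)⟩
    refine ⟨⟨u, huN⟩, fun a ha b hb hab => hscl (hmem a ha) (hmem b hb) hab⟩
  · rintro ⟨⟨u, huN⟩, hNcl⟩
    set S : Set V := insert v (insert w N) with hS
    have hvS : v ∈ S := by simp [hS]
    have hwS : w ∈ S := by simp [hS]
    have hNS : N ⊆ S := fun x hx => by simp [hS, hx]
    have hScl : G.IsClique S := by
      intro a ha b hb hab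
      simp only [hS, Set.mem_insert_iff] at ha hb
      rcases ha with rfl|rfl|ha <;> rcases hb with rfl|rfl|hb
      · exact absurd rfl hab
      · exact hvw
      · exact hb.1
      · exact hvw.symm
      · exact absurd rfl hab
      · exact hb.2
      · exact ha.1.symm
      · exact ha.2.symm
      · exact hNcl ha hb hab
    have hsubS : ∀ t : Set V, G.IsClique t → v ∈ t → w ∈ t → t ⊆ S := by
      intro t htcl hvt hwt x hxt
      by_cases hxv : x = v
      · exact hxv ▸ hvS
      by_cases hxw : x = w
      · exact hxw ▸ hwS
      exact hNS ⟨htcl hvt hxt (Ne.symm hxv), htcl hwt hxt (Ne.symm hxw)⟩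
    have hSmax : IsMaxClique G S :=
      ⟨hScl, fun t htcl hSt => Set.Subset.antisymm
        (hsubS t htcl (hSt hvS) (hSt hwS)) hSt⟩
    refine ⟨hvw, ⟨S, ⟨hSmax, hvS, hwS⟩, ?_⟩, ?_⟩
    · rintro t ⟨⟨htcl, htmax⟩, hvt, hwt⟩
      exact (htmax S hScl (hsubS t htcl hvt hwt)).symm ▸
        (htmax S hScl (hsubS t htcl hvt hwt))
    · rintro ⟨-, hcl, hmax⟩
      have : ({v, w, u} : Set V) = {v, w} := by
        apply hmax
        · intro a ha b hb hab
          simp only [Set.mem_insert_iff, Set.mem_singleton_iff] at ha hb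
          rcases ha with rfl|rfl|rfl <;> rcases hb with rfl|rfl|rfl <;>
            first
              | exact absurd rfl hab
              | exact hvw
              | exact hvw.symm
              | exact huN.1
              | exact huN.1.symm
              | exact huN.2
              | exact huN.2.symm
        · intro x hx
          simp only [Set.mem_insert_iff, Set.mem_singleton_iff] at hx ⊢
          tauto
      have hu : u ∈ ({v, w} : Set V) := this ▸ (by simp : u ∈ ({v, w, u} : Set V))
      rcases hu with rfl|rfl
      · exact G.irrefl huN.1
      · exact G.irrefl huN.2
end

section
/- Let G be a finite simple connected chordal graph and let xy be an exposed edge of G. Then the graph G − xy obtained by deleting the edge xy is connected and chordal. -/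
variable {V : Type*}

open SimpleGraph Walk in
/-- Every clique in a finite graph is contained in a maximal clique. -/
lemma exists_maxclique_supset [Fintype V] (G : SimpleGraph V) {c : Set V} (hc : G.IsClique c) :
    ∃ S, IsMaxClique G S ∧ c ⊆ S := by
  obtain ⟨S, hS, hmax⟩ := Set.Finite.exists_maximalFor id {t : Set V | G.IsClique t ∧ c ⊆ t}
    (Set.toFinite _) ⟨c, hc, subset_rfl⟩
  exact ⟨S, ⟨hS.1, fun t ht hst => Set.Subset.antisymm (hmax ⟨ht, hS.2.trans hst⟩ hst) hst⟩, hS.2⟩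

open SimpleGraph in
/-- If every `G`-edge gives an `H`-reachability, then `G`-walks give `H`-reachabilities. -/
lemma reachable_of_adj_reachable {G H : SimpleGraph V}
    (hr : ∀ a b : V, G.Adj a b → H.Reachable a b) :
    ∀ {u v : V}, G.Walk u v → H.Reachable u v
  | _, _, Walk.nil => Reachable.refl _
  | _, _, Walk.cons h p => (hr _ _ h).trans (reachable_of_adj_reachable hr p)

open SimpleGraph Walk in
/-- A path between adjacent vertices, of length at least three and not using the edge
between them, has a "chord" (using chordality of the ambient graph). -/
lemma arc_chord {G : SimpleGraph V} (hchord : IsChordal G) {x y : V} (hxy : G.Adj x y)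
    (P : G.Walk x y) (hP : P.IsPath) (hlen : 3 ≤ P.length) (hne : s(x, y) ∉ P.edges) :
    ∃ a b, a ∈ P.support ∧ b ∈ P.support ∧ G.Adj a b ∧ s(a, b) ∉ P.edges ∧ s(a, b) ≠ s(x, y) := by
  have hC : (Walk.cons hxy P.reverse).IsCycle := by
    rw [Walk.cons_isCycle_iff]
    refine ⟨hP.reverse, fun hmem => hne ?_⟩
    rwa [Walk.edges_reverse, List.mem_reverse] at hmem
  obtain ⟨a, b, has, hbs, hab, habe⟩ := hchord _ hC
    (by rw [Walk.length_cons, Walk.length_reverse]; omega)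
  simp only [Walk.support_cons, Walk.support_reverse, List.mem_cons, List.mem_reverse,
    Walk.edges_cons, Walk.edges_reverse, not_or] at has hbs habe
  refine ⟨a, b, ?_, ?_, hab, habe.2, habe.1⟩
  · rcases has with rfl | h
    · exact P.start_mem_support
    · exact h
  · rcases hbs with rfl | h
    · exact P.start_mem_support
    · exact h

open SimpleGraph Walk in
/-- A walk between the endpoints of an edge avoiding that edge has length `≠ 1`. -/
lemma length_ne_one_of_edge_not_mem {G : SimpleGraph V} {x y : V} (P : G.Walk x y)
    (hne : s(x, y) ∉ P.edges) : P.length ≠ 1 := by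
  intro hl
  cases P with
  | nil => simp at hl
  | cons h' q =>
    have h0 : q.length = 0 := by simpa using hl
    have := Walk.eq_of_length_eq_zero h0
    subst this
    exact hne (by simp)

open SimpleGraph Walk in
/-- Explicit description of a walk of length two. -/
lemma exists_mid {G : SimpleGraph V} {x y : V} (P : G.Walk x y) (h2 : P.length = 2) :
    ∃ (a : V) (_ : G.Adj x a) (_ : G.Adj a y), a ∈ P.support := by
  cases P with
  | nil => simp at h2
  | cons h' q =>
    cases q with
    | nil => simp at h2
    | cons h'' r =>
      cases r with
      | nil => exact ⟨_, h', h'', by simp⟩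
      | cons h''' r' => simp [Walk.length_cons] at h2

open SimpleGraph Walk in
/-- Deleting an exposed edge from a connected chordal graph yields a connected
chordal graph. -/
theorem erasure_connected_chordal [Fintype V] (G : SimpleGraph V)
    (hconn : G.Connected) (hchord : IsChordal G) (x y : V)
    (h : IsExposedEdge G x y) :
    (G.deleteEdges {s(x, y)}).Connected ∧ IsChordal (G.deleteEdges {s(x, y)}) := by
  classical
  obtain ⟨hadj, huniq, hfacet⟩ := h
  set H := G.deleteEdges {s(x, y)} with hH
  obtain ⟨S, ⟨hSmax, hxS, hyS⟩, hSuniq⟩ := huniq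
  have hxy_ne : x ≠ y := hadj.ne
  -- every common neighbor of x and y lies in S
  have hmemS : ∀ z : V, G.Adj x z → G.Adj y z → z ∈ S := by
    intro z hxz hyz
    have hclique : G.IsClique {x, y, z} := by
      rw [SimpleGraph.isClique_iff]
      intro a ha b hb hne
      simp only [Set.mem_insert_iff, Set.mem_singleton_iff] at ha hb
      rcases ha with rfl | rfl | rfl <;> rcases hb with rfl | rfl | rfl <;>
        first
          | exact absurd rfl hne
          | exact hadj
          | exact hadj.symm
          | exact hxz
          | exact hxz.symm
          | exact hyz
          | exact hyz.symm
    obtain ⟨T, hT, hsub⟩ := exists_maxclique_supset G hclique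
    have hTS : T = S := hSuniq T ⟨hT, hsub (by simp), hsub (by simp)⟩
    exact hTS ▸ hsub (by simp)
  -- there is z in S distinct from x and y
  obtain ⟨z, hzS, hzx, hzy⟩ : ∃ z ∈ S, z ≠ x ∧ z ≠ y := by
    by_contra hcon
    push_neg at hcon
    apply hfacet
    have hSxy : S = {x, y} := by
      apply Set.Subset.antisymm
      · intro u hu
        rw [Set.mem_insert_iff, Set.mem_singleton_iff]
        by_contra hne
        push_neg at hne
        exact hne.2 (hcon u hu hne.1)
      · exact Set.insert_subset_iff.2 ⟨hxS, Set.singleton_subset_iff.2 hyS⟩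
    exact ⟨hadj, hSxy ▸ hSmax⟩
  have hxz : G.Adj x z := ((SimpleGraph.isClique_iff G).1 hSmax.1) hxS hzS (Ne.symm hzx)
  have hyz : G.Adj y z := ((SimpleGraph.isClique_iff G).1 hSmax.1) hyS hzS (Ne.symm hzy)
  have hHadj : ∀ {a b : V}, G.Adj a b → s(a, b) ≠ s(x, y) → H.Adj a b := by
    intro a b hg hne
    rw [hH, SimpleGraph.deleteEdges_adj]
    exact ⟨hg, by simpa using hne⟩
  have hHxz : H.Adj x z := hHadj hxz (by
    intro he; rw [Sym2.eq_iff] at he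
    rcases he with ⟨_, rfl⟩ | ⟨rfl, rfl⟩
    · exact hzy rfl
    · exact hzx rfl)
  have hHzy : H.Adj z y := hHadj hyz.symm (by
    intro he; rw [Sym2.eq_iff] at he
    rcases he with ⟨rfl, _⟩ | ⟨rfl, rfl⟩
    · exact hzx rfl
    · exact hzy rfl)
  -- connectivity
  have hreach : ∀ a b : V, G.Adj a b → H.Reachable a b := by
    intro a b hab
    by_cases he : s(a, b) = s(x, y)
    · have hxyreach : H.Reachable x y := hHxz.reachable.trans hHzy.reachable
      rw [Sym2.eq_iff] at he
      rcases he with ⟨rfl, rfl⟩ | ⟨rfl, rfl⟩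
      · exact hxyreach
      · exact hxyreach.symm
    · exact (hHadj hab he).reachable
  have hHle : H ≤ G := hH ▸ SimpleGraph.deleteEdges_le _
  have hpre : H.Preconnected := by
    intro u v
    obtain ⟨w⟩ := hconn.preconnected u v
    exact reachable_of_adj_reachable hreach w
  haveI : Nonempty V := hconn.nonempty
  have hconn' : H.Connected := ⟨hpre⟩
  refine ⟨hconn', ?_⟩
  -- chordality
  intro v w hw hwlen
  have hsubE : ∀ e ∈ w.edges, e ∈ G.edgeSet :=
    fun e he => SimpleGraph.edgeSet_mono hHle (w.edges_subset_edgeSet he)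
  set wG := w.transfer G hsubE with hwGdef
  have hwG : wG.IsCycle := hw.transfer _
  obtain ⟨a, b, has, hbs, hab, habe⟩ := hchord wG hwG
    (by rw [hwGdef, Walk.length_transfer]; exact hwlen)
  rw [hwGdef, Walk.support_transfer] at has hbs
  rw [hwGdef, Walk.edges_transfer] at habe
  by_cases hcase : s(a, b) = s(x, y)
  swap
  · exact ⟨a, b, has, hbs, hHadj hab hcase, habe⟩
  -- xy is a chord of the cycle
  have hx' : x ∈ wG.support ∧ y ∈ wG.support := by
    rw [hwGdef, Walk.support_transfer]
    rcases Sym2.eq_iff.1 hcase with ⟨rfl, rfl⟩ | ⟨rfl, rfl⟩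
    exacts [⟨has, hbs⟩, ⟨hbs, has⟩]
  have hxyE : s(x, y) ∉ wG.edges := by
    rw [hwGdef, Walk.edges_transfer]; exact hcase ▸ habe
  clear hcase habe hab has hbs
  obtain ⟨hxw, hyw⟩ := hx'
  -- rotate the cycle to start at x
  set C := wG.rotate x hxw with hCdef
  have hC : C.IsCycle := hwG.rotate hxw
  have hCsupp : ∀ u : V, u ∈ C.support ↔ u ∈ wG.support := by
    intro u
    rw [hCdef, Walk.rotate, Walk.mem_support_append_iff, or_comm,
      ← Walk.mem_support_append_iff, Walk.take_spec]
  have hCedges : ∀ e, e ∈ C.edges ↔ e ∈ wG.edges := by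
    intro e
    rw [hCdef, Walk.rotate, Walk.edges_append, List.mem_append, or_comm,
      ← List.mem_append, ← Walk.edges_append, Walk.take_spec]
  have hyC : y ∈ C.support := (hCsupp y).2 hyw
  have hxyEC : s(x, y) ∉ C.edges := fun hm => hxyE ((hCedges _).1 hm)
  -- split at y
  set P := C.takeUntil y hyC with hPdef
  set Q := C.dropUntil y hyC with hQdef
  have hPQ : P.append Q = C := C.take_spec hyC
  have htail : C.support.tail = P.support.tail ++ Q.support.tail := by
    rw [← hPQ, Walk.tail_support_append]
  have hnodup : C.support.tail.Nodup := ((Walk.isCycle_def C).1 hC).2.2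
  rw [htail, List.nodup_append] at hnodup
  obtain ⟨hnodP, hnodQ, hdisj⟩ := hnodup
  replace hdisj : ∀ ⦃a : V⦄, a ∈ P.support.tail → a ∉ Q.support.tail :=
    fun a ha hb => hdisj a ha a hb rfl
  have hxQt : x ∈ Q.support.tail := Walk.end_mem_tail_support_of_ne (Ne.symm hxy_ne) Q
  have hyPt : y ∈ P.support.tail := Walk.end_mem_tail_support_of_ne hxy_ne P
  have hPpath : P.IsPath := by
    rw [Walk.isPath_def, Walk.support_eq_cons]
    exact List.nodup_cons.2 ⟨fun hx0 => hdisj hx0 hxQt, hnodP⟩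
  have hQpath : Q.IsPath := by
    rw [Walk.isPath_def, Walk.support_eq_cons]
    exact List.nodup_cons.2 ⟨fun hy0 => hdisj hyPt hy0, hnodQ⟩
  have hint : ∀ u : V, u ∈ P.support → u ∈ Q.support → u = x ∨ u = y := by
    intro u huP huQ
    rw [Walk.support_eq_cons] at huP huQ
    rcases List.mem_cons.1 huP with rfl | huP
    · exact Or.inl rfl
    rcases List.mem_cons.1 huQ with rfl | huQ
    · exact Or.inr rfl
    exact absurd huQ (hdisj huP)
  have hcross : ∀ a b : V, a ≠ b → a ∈ P.support → b ∈ P.support →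
      a ∈ Q.support → b ∈ Q.support → s(a, b) = s(x, y) := by
    intro a b hne haP hbP haQ hbQ
    rcases hint a haP haQ with rfl | rfl <;> rcases hint b hbP hbQ with rfl | rfl
    · exact absurd rfl hne
    · rfl
    · exact Sym2.eq_swap
    · exact absurd rfl hne
  have hCE : ∀ e, e ∈ C.edges ↔ e ∈ P.edges ∨ e ∈ Q.edges := by
    intro e
    rw [← hPQ, Walk.edges_append, List.mem_append]
  have hsxyP : s(x, y) ∉ P.edges := fun hm => hxyEC ((hCE _).2 (Or.inl hm))
  have hsxyQ : s(x, y) ∉ Q.edges := fun hm => hxyEC ((hCE _).2 (Or.inr hm))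
  have hwsup : ∀ u : V, u ∈ C.support → u ∈ w.support := by
    intro u hu
    have := (hCsupp u).1 hu
    rwa [hwGdef, Walk.support_transfer] at this
  have hwedge : ∀ e, e ∉ C.edges → e ∉ w.edges := by
    intro e he hm
    apply he
    rw [hCedges, hwGdef, Walk.edges_transfer]
    exact hm
  -- length facts
  have hP0 : P.length ≠ 0 := fun h0 => hxy_ne (Walk.eq_of_length_eq_zero h0)
  have hQ0 : Q.length ≠ 0 := fun h0 => hxy_ne (Walk.eq_of_length_eq_zero h0).symm
  have hP1 : P.length ≠ 1 := length_ne_one_of_edge_not_mem P hsxyP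
  have hQ1 : Q.length ≠ 1 := length_ne_one_of_edge_not_mem Q (by rwa [Sym2.eq_swap])
  by_cases hP3 : 3 ≤ P.length
  · -- chord inside P
    obtain ⟨a, b, haP, hbP, hab, habP, habne⟩ := arc_chord hchord hadj P hPpath hP3 hsxyP
    have habQ : s(a, b) ∉ Q.edges := fun hm =>
      habne (hcross a b hab.ne haP hbP (Q.fst_mem_support_of_mem_edges hm)
        (Q.snd_mem_support_of_mem_edges hm))
    refine ⟨a, b, hwsup a (C.support_takeUntil_subset hyC haP),
      hwsup b (C.support_takeUntil_subset hyC hbP), hHadj hab habne, ?_⟩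
    exact hwedge _ (fun hm => ((hCE _).1 hm).elim habP habQ)
  by_cases hQ3 : 3 ≤ Q.length
  · -- chord inside Q
    obtain ⟨a, b, haQ, hbQ, hab, habQ, habne⟩ := arc_chord hchord hadj.symm Q hQpath hQ3
      (by rwa [Sym2.eq_swap])
    have habne' : s(a, b) ≠ s(x, y) := by rwa [← Sym2.eq_swap (a := x)] at habne
    have habP : s(a, b) ∉ P.edges := fun hm =>
      habne' (hcross a b hab.ne (P.fst_mem_support_of_mem_edges hm)
        (P.snd_mem_support_of_mem_edges hm) haQ hbQ)
    refine ⟨a, b, hwsup a (C.support_dropUntil_subset hyC haQ),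
      hwsup b (C.support_dropUntil_subset hyC hbQ), hHadj hab habne', ?_⟩
    exact hwedge _ (fun hm => ((hCE _).1 hm).elim habP habQ)
  -- both arcs have length two
  have hP2 : P.length = 2 := by omega
  have hQ2 : Q.length = 2 := by omega
  obtain ⟨a, hxa, hay, haP⟩ := exists_mid P hP2
  obtain ⟨b, hyb, hbx, hbQ⟩ := exists_mid Q hQ2
  have haS : a ∈ S := hmemS a hxa hay.symm
  have hbS : b ∈ S := hmemS b hbx.symm hyb
  have hax : a ≠ x := hxa.ne'
  have hby : b ≠ y := hyb.ne'
  have haPt : a ∈ P.support.tail := by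
    rw [Walk.support_eq_cons] at haP
    rcases List.mem_cons.1 haP with rfl | h'
    · exact absurd rfl hax
    · exact h'
  have hbQt : b ∈ Q.support.tail := by
    rw [Walk.support_eq_cons] at hbQ
    rcases List.mem_cons.1 hbQ with rfl | h'
    · exact absurd rfl hby
    · exact h'
  have hab_ne : a ≠ b := fun he => hdisj haPt (he ▸ hbQt)
  have hab : G.Adj a b := ((SimpleGraph.isClique_iff G).1 hSmax.1) haS hbS hab_ne
  have habne : s(a, b) ≠ s(x, y) := by
    intro he
    rw [Sym2.eq_iff] at he
    rcases he with ⟨rfl, _⟩ | ⟨rfl, _⟩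
    · exact hax rfl
    · exact hay.ne rfl
  have habP : s(a, b) ∉ P.edges := fun hm => by
    have hbP : b ∈ P.support := P.snd_mem_support_of_mem_edges hm
    rcases hint b hbP hbQ with rfl | rfl
    · exact hbx.ne rfl
    · exact hby rfl
  have habQ : s(a, b) ∉ Q.edges := fun hm => by
    have haQ : a ∈ Q.support := Q.fst_mem_support_of_mem_edges hm
    rcases hint a haP haQ with rfl | rfl
    · exact hax rfl
    · exact hay.ne rfl
  refine ⟨a, b, hwsup a (C.support_takeUntil_subset hyC haP),
    hwsup b (C.support_dropUntil_subset hyC hbQ), hHadj hab habne, ?_⟩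
  exact hwedge _ (fun hm => ((hCE _).1 hm).elim habP habQ)
end

section
/- Let G be a finite simple connected chordal graph that is not complete. Then there exist non-adjacent vertices v and w of G such that the graph G + vw obtained by adding the edge vw is chordal and the edge vw is exposed in G + vw. -/
variable {V : Type*}

open SimpleGraph Walk

theorem SimpleGraph.Walk.getVert_cons_one {G : SimpleGraph V} {u v w : V} (q : G.Walk v w)
    (h : G.Adj u v) : (Walk.cons h q).getVert 1 = v := by
  rw [Walk.getVert_cons_succ, Walk.getVert_zero]

namespace ChordalProofAux

variable {G : SimpleGraph V}

/-- induced path: a path such that every adjacency between support vertices is a path edge -/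
def IsInd {v w : V} (p : G.Walk v w) : Prop :=
  p.IsPath ∧ ∀ a b : V, a ∈ p.support → b ∈ p.support → G.Adj a b → s(a, b) ∈ p.edges

lemma getVert_injOn {v w : V} {p : G.Walk v w} (hp : p.IsPath) :
    ∀ {i j : ℕ}, i ≤ p.length → j ≤ p.length → p.getVert i = p.getVert j → i = j := by
  induction p with
  | nil => intro i j hi hj _; simp at hi hj; omega
  | cons hadj q ih =>
    intro i j hi hj hij
    rw [Walk.length_cons] at hi hj
    match i, j with
    | 0, 0 => rfl
    | 0, (n+1) =>
      exfalso
      rw [Walk.getVert_zero, Walk.getVert_cons_succ] at hij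
      exact ((Walk.cons_isPath_iff _ _).mp hp).2
        (Walk.mem_support_iff_exists_getVert.mpr ⟨n, hij.symm, by omega⟩)
    | (n+1), 0 =>
      exfalso
      rw [Walk.getVert_zero, Walk.getVert_cons_succ] at hij
      exact ((Walk.cons_isPath_iff _ _).mp hp).2
        (Walk.mem_support_iff_exists_getVert.mpr ⟨n, hij, by omega⟩)
    | (m+1), (n+1) =>
      rw [Walk.getVert_cons_succ, Walk.getVert_cons_succ] at hij
      have := ih ((Walk.cons_isPath_iff _ _).mp hp).1 (by omega) (by omega) hij
      omega

lemma ne_of_isPath_of_length_pos {v w : V} {p : G.Walk v w} (hp : p.IsPath)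
    (hl : 0 < p.length) : v ≠ w := by
  intro h
  subst h
  have : (0 : ℕ) = p.length := getVert_injOn hp (by omega) le_rfl
    (by rw [Walk.getVert_zero, Walk.getVert_length])
  omega

lemma eq_snd_of_mem_edges {v w b : V} {p : G.Walk v w} (hp : p.IsPath)
    (h : s(v, b) ∈ p.edges) : b = p.getVert 1 := by
  cases p with
  | nil => simp at h
  | @cons _ x _ hadj q =>
    rw [Walk.edges_cons, List.mem_cons] at h
    rcases h with h | h
    · rw [Sym2.eq_iff] at h
      rcases h with ⟨-, rfl⟩ | ⟨h1, rfl⟩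
      · exact (Walk.getVert_cons_one _ hadj).symm
      · exact absurd h1 hadj.ne
    · exact absurd (Walk.fst_mem_support_of_mem_edges q h)
        ((Walk.cons_isPath_iff _ _).mp hp).2

lemma eq_penult_of_mem_edges {v w a : V} {p : G.Walk v w} (hp : p.IsPath)
    (h : s(a, w) ∈ p.edges) : a = p.getVert (p.length - 1) := by
  have h' : s(w, a) ∈ p.reverse.edges := by
    rw [Walk.edges_reverse, List.mem_reverse, Sym2.eq_swap]; exact h
  have := eq_snd_of_mem_edges hp.reverse h'
  rwa [Walk.getVert_reverse] at this

lemma edge_getVert_mem {v w : V} (p : G.Walk v w) : ∀ {i : ℕ}, i < p.length →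
    s(p.getVert i, p.getVert (i + 1)) ∈ p.edges := by
  induction p with
  | nil => intro i h; simp at h
  | @cons _ x _ hadj q ih =>
    intro i h
    rw [Walk.length_cons] at h
    cases i with
    | zero =>
      rw [Walk.getVert_zero, Walk.getVert_cons_one _ hadj, Walk.edges_cons]
      exact List.mem_cons_self
    | succ n =>
      rw [Walk.getVert_cons_succ, Walk.getVert_cons_succ, Walk.edges_cons]
      exact List.mem_cons_of_mem _ (ih (by omega))

lemma length_takeUntil_add [DecidableEq V] {u v w : V} (p : G.Walk v w) (h : u ∈ p.support) :
    (p.takeUntil u h).length + (p.dropUntil u h).length = p.length := by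
  conv_rhs => rw [← Walk.take_spec p h]
  rw [Walk.length_append]

lemma getVert_length_takeUntil [DecidableEq V] {u v w : V} (p : G.Walk v w)
    (h : u ∈ p.support) : p.getVert (p.takeUntil u h).length = u := by
  have hs := congrArg (fun r : G.Walk v w => r.getVert (p.takeUntil u h).length)
    (Walk.take_spec p h)
  rw [← hs, Walk.getVert_append, if_neg (lt_irrefl _), Nat.sub_self, Walk.getVert_zero]


lemma isPath_concat {u v x : V} {p : G.Walk u v} (hp : p.IsPath) (h : G.Adj v x)
    (hx : x ∉ p.support) : (p.concat h).IsPath := by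
  rw [Walk.isPath_def, Walk.support_concat, List.nodup_append]
  exact ⟨hp.support_nodup, List.nodup_singleton _, by simpa using fun a (ha : a ∈ p.support) (hax : a = x) => hx (hax ▸ ha)⟩

lemma IsInd.takeUntil [DecidableEq V] {v w u : V} {p : G.Walk v w} (h : IsInd p)
    (hu : u ∈ p.support) : IsInd (p.takeUntil u hu) := by
  refine ⟨h.1.takeUntil hu, ?_⟩
  intro a b ha hb hab
  have hmem := h.2 a b (Walk.support_takeUntil_subset _ _ ha)
    (Walk.support_takeUntil_subset _ _ hb) hab
  have hs := congrArg (fun r : G.Walk v w => r.edges) (Walk.take_spec p hu)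
  rw [← hs, Walk.edges_append, List.mem_append] at hmem
  rcases hmem with h1 | h1
  · exact h1
  · exfalso
    have hps : p.support.Nodup := h.1.support_nodup
    have hsup := congrArg (fun r : G.Walk v w => r.support) (Walk.take_spec p hu)
    rw [← hsup, Walk.support_append] at hps
    have hdisj := List.disjoint_of_nodup_append hps
    have key : ∀ c : V, c ∈ (p.takeUntil u hu).support →
        c ∈ (p.dropUntil u hu).support → c = u := by
      intro c hc1 hc2
      rw [Walk.support_eq_cons (p.dropUntil u hu), List.mem_cons] at hc2
      rcases hc2 with h2 | h2
      · exact h2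
      · exact absurd h2 (hdisj hc1)
    have ha' : a = u := key a ha (Walk.fst_mem_support_of_mem_edges _ h1)
    have hb' : b = u := key b hb (Walk.snd_mem_support_of_mem_edges _ h1)
    rw [ha', hb'] at hab
    exact G.loopless.irrefl u hab

lemma IsInd.of_cons {v x w : V} {h : G.Adj v x} {q : G.Walk x w}
    (hi : IsInd (Walk.cons h q)) : IsInd q := by
  refine ⟨((Walk.cons_isPath_iff _ _).mp hi.1).1, ?_⟩
  intro a b ha hb hab
  have hv : v ∉ q.support := ((Walk.cons_isPath_iff _ _).mp hi.1).2
  have := hi.2 a b (by rw [Walk.support_cons]; exact List.mem_cons_of_mem _ ha)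
    (by rw [Walk.support_cons]; exact List.mem_cons_of_mem _ hb) hab
  rw [Walk.edges_cons, List.mem_cons] at this
  rcases this with h1 | h1
  · exfalso
    rw [Sym2.eq_iff] at h1
    rcases h1 with ⟨rfl, rfl⟩ | ⟨rfl, rfl⟩
    · exact hv ha
    · exact hv hb
  · exact h1

lemma IsInd.reverse {v w : V} {p : G.Walk v w} (h : IsInd p) : IsInd p.reverse := by
  refine ⟨h.1.reverse, ?_⟩
  intro a b ha hb hab
  rw [Walk.support_reverse, List.mem_reverse] at ha hb
  rw [Walk.edges_reverse, List.mem_reverse]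
  exact h.2 a b ha hb hab

lemma exists_induced_path (hr : G.Reachable v w) :
    ∃ p : G.Walk v w, IsInd p ∧ p.length = G.dist v w := by
  classical
  obtain ⟨p, hp, hlen⟩ := hr.exists_path_of_dist
  refine ⟨p, ⟨hp, ?_⟩, hlen⟩
  intro a b ha hb hab
  by_contra hne
  set α := (p.takeUntil a ha).length with hα
  set β := (p.takeUntil b hb).length with hβ
  have hga : p.getVert α = a := getVert_length_takeUntil p ha
  have hgb : p.getVert β = b := getVert_length_takeUntil p hb
  have hsum_a : α + (p.dropUntil a ha).length = p.length := length_takeUntil_add p ha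
  have hsum_b : β + (p.dropUntil b hb).length = p.length := length_takeUntil_add p hb
  have hd1 : G.dist v w ≤ ((p.takeUntil a ha).append
      (Walk.cons hab (p.dropUntil b hb))).length := SimpleGraph.dist_le _
  have hd2 : G.dist v w ≤ ((p.takeUntil b hb).append
      (Walk.cons hab.symm (p.dropUntil a ha))).length := SimpleGraph.dist_le _
  rw [Walk.length_append, Walk.length_cons] at hd1 hd2
  have hne' : α ≠ β := by
    intro h
    rw [h, hgb] at hga
    exact G.loopless.irrefl b (hga ▸ hab)
  have hcase : β = α + 1 ∨ α = β + 1 := by omega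
  rcases hcase with hc | hc
  · have : s(p.getVert α, p.getVert (α + 1)) ∈ p.edges :=
      edge_getVert_mem p (by omega)
    rw [hga, ← hc, hgb] at this
    exact hne this
  · have : s(p.getVert β, p.getVert (β + 1)) ∈ p.edges :=
      edge_getVert_mem p (by omega)
    rw [hgb, ← hc, hga, Sym2.eq_swap] at this
    exact hne this


lemma common_adj (hch : IsChordal G) {v w a b : V} (hvw : v ≠ w) (hnadj : ¬ G.Adj v w)
    (ha1 : G.Adj v a) (ha2 : G.Adj a w) (hb1 : G.Adj v b) (hb2 : G.Adj b w)
    (hab : a ≠ b) : G.Adj a b := by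
  by_contra hnab
  have nva : v ≠ a := ha1.ne
  have nav : a ≠ v := ha1.ne'
  have naw : a ≠ w := ha2.ne
  have nwa : w ≠ a := ha2.ne'
  have nvb : v ≠ b := hb1.ne
  have nbv : b ≠ v := hb1.ne'
  have nbw : b ≠ w := hb2.ne
  have nwb : w ≠ b := hb2.ne'
  have nwv : w ≠ v := hvw.symm
  have nba : b ≠ a := hab.symm
  have hpath : (Walk.cons ha2 (Walk.cons hb2.symm (Walk.cons hb1.symm Walk.nil))).IsPath := by
    rw [Walk.isPath_def]
    simp [naw, nav, hab, nwb, nwv, nbv]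
  have hnemem : s(v, a) ∉ (Walk.cons ha2 (Walk.cons hb2.symm (Walk.cons hb1.symm Walk.nil))).edges := by
    simp [Sym2.eq_iff, nva, hvw, nvb, naw, nav, hab]
  have hcyc : (Walk.cons ha1 (Walk.cons ha2 (Walk.cons hb2.symm
      (Walk.cons hb1.symm Walk.nil)))).IsCycle :=
    (Walk.cons_isCycle_iff _ _).mpr ⟨hpath, hnemem⟩
  obtain ⟨x, y, hx, hy, hxy, hxyn⟩ := hch _ hcyc (by simp)
  simp only [Walk.support_cons, Walk.support_nil, List.mem_cons,
    List.not_mem_nil, or_false] at hx hy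
  rcases hx with rfl | rfl | rfl | rfl | rfl <;> rcases hy with rfl | rfl | rfl | rfl | rfl <;>
    first
      | exact G.loopless.irrefl _ hxy
      | exact hnadj hxy
      | exact hnadj hxy.symm
      | exact hnab hxy
      | exact hnab hxy.symm
      | exact hxyn (by simp [Sym2.eq_iff])


lemma adj_snd (hch : IsChordal G) :
    ∀ n : ℕ, ∀ {v w s : V} (p : G.Walk v w), p.length ≤ n → IsInd p → 2 ≤ p.length →
      s ∉ p.support → G.Adj s v → G.Adj s w → G.Adj s (p.getVert 1) := by
  classical
  intro n
  induction n with
  | zero => intro v w s p hn _ h2 _ _ _; omega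
  | succ n ih =>
    intro v w s p hn hind h2 hs hsv hsw
    by_contra hdone
    have hp := hind.1
    have hvw : v ≠ w := ne_of_isPath_of_length_pos hp (by omega)
    have hsvE : s(s, v) ∉ (p.concat hsw.symm).edges := by
      rw [Walk.edges_concat, List.concat_eq_append, List.mem_append]
      rintro (h1 | h1)
      · exact hs (Walk.fst_mem_support_of_mem_edges p h1)
      · rw [List.mem_singleton, Sym2.eq_iff] at h1
        rcases h1 with ⟨rfl, h1⟩ | ⟨-, h1⟩
        · exact hsw.ne rfl
        · exact hvw h1
    have hcpath : (p.concat hsw.symm).IsPath := isPath_concat hp hsw.symm hs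
    have hcyc : (Walk.cons hsv (p.concat hsw.symm)).IsCycle :=
      (Walk.cons_isCycle_iff _ _).mpr ⟨hcpath, hsvE⟩
    have hlen4 : 4 ≤ (Walk.cons hsv (p.concat hsw.symm)).length := by
      rw [Walk.length_cons, Walk.length_concat]; omega
    obtain ⟨x, y, hx, hy, hxy, hxyn⟩ := hch _ hcyc hlen4
    have hmemS : ∀ z : V, z ∈ (Walk.cons hsv (p.concat hsw.symm)).support →
        z = s ∨ z ∈ p.support := by
      intro z hz
      rw [Walk.support_cons, List.mem_cons] at hz
      rcases hz with rfl | hz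
      · exact Or.inl rfl
      · rw [Walk.support_concat, List.mem_append] at hz
        rcases hz with hz | hz
        · exact Or.inr hz
        · rw [List.mem_singleton] at hz; exact Or.inl hz
    have hedgesub : ∀ e, e ∈ p.edges → e ∈ (Walk.cons hsv (p.concat hsw.symm)).edges := by
      intro e he
      rw [Walk.edges_cons, Walk.edges_concat, List.concat_eq_append]
      exact List.mem_cons_of_mem _ (List.mem_append_left _ he)
    have hkey : ∀ b : V, b ∈ p.support → G.Adj s b →
        s(s, b) ∉ (Walk.cons hsv (p.concat hsw.symm)).edges → False := by
      intro b hb hsb hnmem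
      have hbv : b ≠ v := by
        rintro rfl
        exact hnmem (by rw [Walk.edges_cons]; exact List.mem_cons_self)
      have hbw : b ≠ w := by
        rintro rfl
        refine hnmem ?_
        rw [Walk.edges_cons, Walk.edges_concat, List.concat_eq_append]
        refine List.mem_cons_of_mem _ (List.mem_append_right _ ?_)
        rw [List.mem_singleton, Sym2.eq_swap]
      have hqind : IsInd (p.takeUntil b hb) := hind.takeUntil hb
      have hql : (p.takeUntil b hb).length + (p.dropUntil b hb).length = p.length :=
        length_takeUntil_add p hb
      have hq1 : 1 ≤ (p.takeUntil b hb).length := by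
        by_contra h0
        have h0' : (p.takeUntil b hb).length = 0 := by omega
        have hbv' : b = v := by
          have h1 := (p.takeUntil b hb).getVert_length
          rw [h0', Walk.getVert_zero] at h1
          exact h1.symm
        exact hbv hbv'
      have hqlt : (p.takeUntil b hb).length < p.length := by
        by_contra hge
        have hd0 : (p.dropUntil b hb).length = 0 := by omega
        have hbw' : b = w := by
          have h1 := (p.dropUntil b hb).getVert_length
          rw [hd0, Walk.getVert_zero] at h1
          exact h1
        exact hbw hbw'
      have hq1eq : (p.takeUntil b hb).getVert 1 = p.getVert 1 := by
        have hmm : s(v, (p.takeUntil b hb).getVert 1) ∈ (p.takeUntil b hb).edges := by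
          have := edge_getVert_mem (p.takeUntil b hb) (by omega : 0 < (p.takeUntil b hb).length)
          rwa [Walk.getVert_zero] at this
        exact eq_snd_of_mem_edges hp (Walk.edges_takeUntil_subset p hb hmm)
      rcases eq_or_lt_of_le hq1 with h1 | h2'
      · have hb1 : b = (p.takeUntil b hb).getVert 1 := by
          have h3 := (p.takeUntil b hb).getVert_length
          rw [← h1] at h3
          exact h3.symm
        rw [hb1, hq1eq] at hsb
        exact hdone hsb
      · have hsq : s ∉ (p.takeUntil b hb).support :=
          fun hx' => hs (Walk.support_takeUntil_subset p hb hx')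
        have := ih (p.takeUntil b hb) (by omega) hqind (by omega) hsq hsv hsb
        rw [hq1eq] at this
        exact hdone this
    rcases hmemS x hx with rfl | hxp
    · rcases hmemS y hy with rfl | hyp
      · exact G.loopless.irrefl _ hxy
      · exact hkey y hyp hxy hxyn
    · rcases hmemS y hy with rfl | hyp
      · exact hkey x hxp hxy.symm (by rwa [Sym2.eq_swap])
      · exact hxyn (hedgesub _ (hind.2 x y hxp hyp hxy))


lemma no_long_induced [Finite V] (hch : IsChordal G) (m : ℕ)
    (hmax : ∀ a b : V, a ≠ b → ¬ G.Adj a b → ({x | G.Adj a x ∧ G.Adj x b}.ncard ≤ m)) :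
    ∀ k : ℕ, ∀ v w : V, v ≠ w → ¬ G.Adj v w →
      {x | G.Adj v x ∧ G.Adj x w}.ncard = m →
      ∀ p : G.Walk v w, IsInd p → p.length = k → k ≤ 2 := by
  intro k
  induction k using Nat.strong_induction_on with
  | _ k ihk =>
    intro v w hvw hnadj hcard p hind hlen
    by_contra h3
    push_neg at h3
    cases p with
    | nil => exact hvw rfl
    | @cons _ x _ hadj q =>
      rw [Walk.length_cons] at hlen
      have hqlen : q.length = k - 1 := by omega
      have hqind : IsInd q := hind.of_cons
      have hqpath := hqind.1
      have hppath := hind.1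
      have hxw : x ≠ w := ne_of_isPath_of_length_pos hqpath (by omega)
      have hx1 : (Walk.cons hadj q).getVert 1 = x := Walk.getVert_cons_one _ hadj
      have hclen : (Walk.cons hadj q).length = k := by rw [Walk.length_cons]; omega
      have hnxw : ¬ G.Adj x w := by
        intro hxwadj
        have hxs : x ∈ (Walk.cons hadj q).support := by
          rw [Walk.support_cons]; exact List.mem_cons_of_mem _ q.start_mem_support
        have hws : w ∈ (Walk.cons hadj q).support := Walk.end_mem_support _
        have hmem := hind.2 x w hxs hws hxwadj
        rw [Walk.edges_cons, List.mem_cons] at hmem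
        rcases hmem with h1 | h1
        · rw [Sym2.eq_iff] at h1
          rcases h1 with ⟨h1, h2⟩ | ⟨h1, h2⟩
          · exact hxw h2.symm
          · exact hvw h2.symm
        · have e1 := eq_snd_of_mem_edges hqpath h1
          have e2 : w = q.getVert q.length := q.getVert_length.symm
          have : (1 : ℕ) = q.length :=
            getVert_injOn hqpath (by omega) le_rfl (by rw [← e1, ← e2])
          omega
      have hsub : {z | G.Adj v z ∧ G.Adj z w} ⊆ {z | G.Adj x z ∧ G.Adj z w} := by
        intro s hsmem
        obtain ⟨hsv, hsw⟩ := hsmem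
        have hsns : s ∉ (Walk.cons hadj q).support := by
          intro hsS
          have h1 := hind.2 v s (Walk.start_mem_support _) hsS hsv
          have h2 := hind.2 s w hsS (Walk.end_mem_support _) hsw
          have e1 : s = (Walk.cons hadj q).getVert 1 := eq_snd_of_mem_edges hppath h1
          have e2 : s = (Walk.cons hadj q).getVert ((Walk.cons hadj q).length - 1) :=
            eq_penult_of_mem_edges hppath h2
          have : (1 : ℕ) = (Walk.cons hadj q).length - 1 :=
            getVert_injOn hppath (by rw [hclen]; omega) (by omega) (by rw [← e1, ← e2])
          rw [hclen] at this
          omega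
        have hadj1 := adj_snd hch ((Walk.cons hadj q).length) (Walk.cons hadj q) le_rfl hind
          (by rw [hclen]; omega) hsns hsv.symm hsw
        rw [hx1] at hadj1
        exact ⟨hadj1.symm, hsw⟩
      have hcard2 : {z | G.Adj x z ∧ G.Adj z w}.ncard = m := by
        have h1 : m ≤ {z | G.Adj x z ∧ G.Adj z w}.ncard := by
          rw [← hcard]; exact Set.ncard_le_ncard hsub (Set.toFinite _)
        have h2 := hmax x w hxw hnxw
        omega
      rcases Nat.lt_or_ge (k - 1) 3 with hk1 | hk1
      · have hqlen2 : q.length = 2 := by omega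
        have ha1 : G.Adj x (q.getVert 1) := by
          have := q.adj_getVert_succ (by omega : 0 < q.length)
          rwa [Walk.getVert_zero] at this
        have ha2 : G.Adj (q.getVert 1) w := by
          have h5 := q.adj_getVert_succ (by omega : 1 < q.length)
          have h2 : q.getVert 2 = w := by
            have := q.getVert_length
            rwa [hqlen2] at this
          rwa [h2] at h5
        have hx2nmem : q.getVert 1 ∉ {z | G.Adj v z ∧ G.Adj z w} := by
          rintro ⟨hv2, -⟩
          have hx2s : q.getVert 1 ∈ (Walk.cons hadj q).support := by
            rw [Walk.support_cons]
            exact List.mem_cons_of_mem _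
              (Walk.mem_support_iff_exists_getVert.mpr ⟨1, rfl, by omega⟩)
          have h1 := hind.2 v (q.getVert 1) (Walk.start_mem_support _) hx2s hv2
          have e1 : q.getVert 1 = (Walk.cons hadj q).getVert 1 :=
            eq_snd_of_mem_edges hppath h1
          rw [hx1] at e1
          have : (1 : ℕ) = 0 := getVert_injOn hqpath (by omega) (by omega)
            (by rw [Walk.getVert_zero, e1])
          omega
        have hss : {z | G.Adj v z ∧ G.Adj z w} ⊂ {z | G.Adj x z ∧ G.Adj z w} :=
          ⟨hsub, fun hsup => hx2nmem (hsup ⟨ha1, ha2⟩)⟩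
        have := Set.ncard_lt_ncard hss (Set.toFinite _)
        omega
      · have := ihk (k - 1) (by omega) x w hxw hnxw hcard2 q hqind hqlen
        omega


lemma cycle_split {v w : V} (c : G.Walk v v) (hc : c.IsCycle) (he : s(v, w) ∈ c.edges) :
    ∃ q : G.Walk w v, q.IsPath ∧ s(v, w) ∉ q.edges ∧ q.length + 1 = c.length ∧
      (∀ x, x ∈ q.support → x ∈ c.support) ∧
      (∀ e, e ∈ c.edges ↔ e = s(v, w) ∨ e ∈ q.edges) := by
  cases c with
  | nil => simp at he
  | @cons _ x _ hadj q0 =>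
    obtain ⟨hq0path, hq0ne⟩ := (Walk.cons_isCycle_iff _ _).mp hc
    by_cases hx : x = w
    · subst hx
      refine ⟨q0, hq0path, hq0ne, by rw [Walk.length_cons], ?_, ?_⟩
      · intro z hz; rw [Walk.support_cons]; exact List.mem_cons_of_mem _ hz
      · intro e; rw [Walk.edges_cons, List.mem_cons]
    · have hq0e : s(v, w) ∈ q0.edges := by
        rw [Walk.edges_cons, List.mem_cons] at he
        rcases he with h1 | h1
        · exfalso
          rw [Sym2.eq_iff] at h1
          rcases h1 with ⟨-, h2⟩ | ⟨h2, -⟩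
          · exact hx h2.symm
          · exact hadj.ne h2
        · exact h1
      have hq0len : 2 ≤ q0.length := by
        have h3 := hc.three_le_length
        rw [Walk.length_cons] at h3
        omega
      have hrpath : q0.reverse.IsPath := hq0path.reverse
      have hrnil : ¬ q0.reverse.Nil := by
        rw [Walk.nil_iff_length_eq, Walk.length_reverse]
        omega
      have hr1 : q0.reverse.getVert 1 = w := by
        have hpen : w = q0.getVert (q0.length - 1) :=
          eq_penult_of_mem_edges hq0path (by rw [Sym2.eq_swap]; exact hq0e)
        rw [Walk.getVert_reverse]
        exact hpen.symm
      have hcte := Walk.cons_tail_eq q0.reverse hrnil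
      have hredges := congrArg (fun r : G.Walk v x => r.edges) hcte
      simp only [Walk.edges_cons] at hredges
      have hedge_eq : s(v, q0.reverse.getVert 1) = s(v, w) := by rw [hr1]
      have hredges2 : ∀ e, e ∈ q0.reverse.edges ↔ e = s(v, w) ∨ e ∈ q0.reverse.tail.edges := by
        intro e
        rw [← hredges, List.mem_cons]
        constructor
        · rintro (h | h)
          · exact Or.inl (h.trans hedge_eq)
          · exact Or.inr h
        · rintro (h | h)
          · exact Or.inl (h.trans hedge_eq.symm)
          · exact Or.inr h
      have htpath : q0.reverse.tail.IsPath := hrpath.tail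
      have htsupp : q0.reverse.tail.support = q0.reverse.support.tail :=
        Walk.support_tail_of_not_nil _ hrnil
      have hvnt : v ∉ q0.reverse.tail.support := by
        rw [htsupp]
        have hnd := hrpath.support_nodup
        rw [Walk.support_eq_cons q0.reverse] at hnd
        exact (List.nodup_cons.mp hnd).1
      have hnotvw : s(v, w) ∉ q0.reverse.tail.edges := by
        intro hmem
        have hnd : q0.reverse.edges.Nodup := hrpath.isTrail.edges_nodup
        rw [← hredges] at hnd
        refine (List.nodup_cons.mp hnd).1 ?_
        rw [hedge_eq]
        exact hmem
      refine ⟨(q0.reverse.tail.copy hr1 rfl).concat hadj.symm, ?_, ?_, ?_, ?_, ?_⟩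
      · apply isPath_concat
        · rw [Walk.isPath_copy]
          exact htpath
        · rw [Walk.support_copy]
          exact hvnt
      · rw [Walk.edges_concat, List.concat_eq_append, List.mem_append, Walk.edges_copy]
        rintro (h1 | h1)
        · exact hnotvw h1
        · rw [List.mem_singleton, Sym2.eq_iff] at h1
          rcases h1 with ⟨h1, -⟩ | ⟨-, h1⟩
          · exact hadj.ne h1
          · exact hx h1.symm
      · rw [Walk.length_concat, Walk.length_copy, Walk.length_cons]
        have := Walk.length_tail_add_one hrnil
        rw [Walk.length_reverse] at this
        omega
      · intro z hz
        rw [Walk.support_concat, List.mem_append, Walk.support_copy] at hz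
        rw [Walk.support_cons, List.mem_cons]
        rcases hz with hz | hz
        · right
          have : z ∈ q0.reverse.support := by
            rw [htsupp] at hz
            exact List.tail_subset _ hz
          rwa [Walk.support_reverse, List.mem_reverse] at this
        · rw [List.mem_singleton] at hz
          exact Or.inl hz
      · intro e
        rw [Walk.edges_cons, List.mem_cons, Walk.edges_concat, List.concat_eq_append,
          List.mem_append, Walk.edges_copy, List.mem_singleton]
        constructor
        · rintro (rfl | h1)
          · right; right
            rw [Sym2.eq_swap]
          · have : e ∈ q0.reverse.edges := by
              rw [Walk.edges_reverse, List.mem_reverse]; exact h1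
            rcases (hredges2 e).mp this with h2 | h2
            · exact Or.inl h2
            · exact Or.inr (Or.inl h2)
        · rintro (rfl | h1 | h1)
          · right
            exact hq0e
          · have : e ∈ q0.reverse.edges := (hredges2 e).mpr (Or.inr h1)
            rw [Walk.edges_reverse, List.mem_reverse] at this
            exact Or.inr this
          · subst h1
            exact Or.inl Sym2.eq_swap


lemma mem_support_iff_mem_tail {v : V} {c : G.Walk v v} (hnil : ¬ c.Nil) {x : V} :
    x ∈ c.support ↔ x ∈ c.support.tail := by
  constructor
  · intro hx
    rw [Walk.support_eq_cons, List.mem_cons] at hx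
    rcases hx with rfl | hx
    · have h1 := c.tail.end_mem_support
      rwa [Walk.support_tail_of_not_nil c hnil] at h1
    · exact hx
  · intro hx
    rw [Walk.support_eq_cons, List.mem_cons]
    exact Or.inr hx

end ChordalProofAux

open ChordalProofAux

/-- A non-complete connected chordal graph admits a pair of non-adjacent vertices
`v, w` such that adding the edge `vw` keeps the graph chordal and makes `vw` exposed. -/
theorem exists_exposed_extension [Fintype V] (G : SimpleGraph V)
    (hconn : G.Connected) (hchord : IsChordal G) (hnc : G ≠ ⊤) :
    ∃ v w : V, v ≠ w ∧ ¬ G.Adj v w ∧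
      IsChordal (G ⊔ SimpleGraph.fromEdgeSet {s(v, w)}) ∧
      IsExposedEdge (G ⊔ SimpleGraph.fromEdgeSet {s(v, w)}) v w := by
  classical
  have hpair : ∃ p : V × V, p.1 ≠ p.2 ∧ ¬ G.Adj p.1 p.2 := by
    by_contra h
    push_neg at h
    apply hnc
    ext a b
    simp only [SimpleGraph.top_adj]
    exact ⟨fun hab => hab.ne, fun hne => h (a, b) hne⟩
  obtain ⟨P, hPmem, hPmax⟩ := Finset.exists_max_image
    (Finset.univ.filter fun p : V × V => p.1 ≠ p.2 ∧ ¬ G.Adj p.1 p.2)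
    (fun p => {x | G.Adj p.1 x ∧ G.Adj x p.2}.ncard)
    (by
      obtain ⟨p, h1, h2⟩ := hpair
      exact ⟨p, Finset.mem_filter.mpr ⟨Finset.mem_univ _, h1, h2⟩⟩)
  obtain ⟨v, w⟩ := P
  obtain ⟨hne, hnadj⟩ := (Finset.mem_filter.mp hPmem).2
  set m := {x | G.Adj v x ∧ G.Adj x w}.ncard with hm
  have hmax : ∀ a b : V, a ≠ b → ¬ G.Adj a b → {x | G.Adj a x ∧ G.Adj x b}.ncard ≤ m := by
    intro a b h1 h2
    exact hPmax (a, b) (Finset.mem_filter.mpr ⟨Finset.mem_univ _, h1, h2⟩)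
  have hnoind : ∀ (p : G.Walk v w), IsInd p → p.length = 2 := by
    intro p hind
    have hle := no_long_induced hchord m hmax p.length v w hne hnadj hm.symm p hind rfl
    have h0 : p.length ≠ 0 := by
      intro h0
      have h1 := p.getVert_length
      rw [h0, Walk.getVert_zero] at h1
      exact hne h1
    have h1 : p.length ≠ 1 := by
      intro h1
      have h2 := p.adj_getVert_succ (by omega : 0 < p.length)
      rw [Walk.getVert_zero] at h2
      have h3 : p.getVert 1 = w := by
        rw [← h1]
        exact p.getVert_length
      rw [h3] at h2
      exact hnadj h2
    omega
  obtain ⟨p0, hp0ind, hp0len⟩ := exists_induced_path (hconn.preconnected v w)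
  have hp02 : p0.length = 2 := hnoind p0 hp0ind
  have hu1 : G.Adj v (p0.getVert 1) := by
    have := p0.adj_getVert_succ (by omega : 0 < p0.length)
    rwa [Walk.getVert_zero] at this
  have hu2 : G.Adj (p0.getVert 1) w := by
    have h5 := p0.adj_getVert_succ (by omega : 1 < p0.length)
    have h2 : p0.getVert 2 = w := by
      have := p0.getVert_length
      rwa [hp02] at this
    rwa [h2] at h5
  set u := p0.getVert 1 with hu
  set G' := G ⊔ SimpleGraph.fromEdgeSet {s(v, w)} with hG'
  have hG'adj : ∀ a b : V, G'.Adj a b ↔ G.Adj a b ∨ (s(a, b) = s(v, w) ∧ a ≠ b) := by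
    intro a b
    rw [hG', SimpleGraph.sup_adj, SimpleGraph.fromEdgeSet_adj, Set.mem_singleton_iff]
  have hvwG' : G'.Adj v w := (hG'adj v w).mpr (Or.inr ⟨rfl, hne⟩)
  have hGle : ∀ a b : V, G.Adj a b → G'.Adj a b := fun a b h => (hG'adj a b).mpr (Or.inl h)
  have hG'toG : ∀ a b : V, G'.Adj a b → a ≠ v ∨ b ≠ w → a ≠ w ∨ b ≠ v → G.Adj a b := by
    intro a b h h1 h2
    rcases (hG'adj a b).mp h with h3 | ⟨h3, h4⟩
    · exact h3
    · exfalso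
      rw [Sym2.eq_iff] at h3
      rcases h3 with ⟨rfl, rfl⟩ | ⟨rfl, rfl⟩
      · rcases h1 with h1 | h1 <;> exact h1 rfl
      · rcases h2 with h2 | h2 <;> exact h2 rfl
  refine ⟨v, w, hne, hnadj, ?_, ?_⟩
  · -- chordality of G'
    intro z c hc hlen
    by_cases he : s(v, w) ∈ c.edges
    · -- the cycle uses the new edge
      have hv : v ∈ c.support := c.fst_mem_support_of_mem_edges he
      have hc0 : (c.rotate v hv).IsCycle := hc.rotate hv
      have hc0len : (c.rotate v hv).length = c.length := by
        have h1 := length_takeUntil_add c hv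
        simp only [Walk.rotate, Walk.length_append]
        omega
      have hceq : ∀ e, e ∈ (c.rotate v hv).edges ↔ e ∈ c.edges :=
        fun e => (Walk.rotate_edges c v hv).mem_iff
      have hcsup : ∀ x, x ∈ (c.rotate v hv).support ↔ x ∈ c.support := by
        intro x
        rw [mem_support_iff_mem_tail hc0.not_nil, mem_support_iff_mem_tail hc.not_nil]
        exact (Walk.support_rotate c v hv).mem_iff
      have he0 : s(v, w) ∈ (c.rotate v hv).edges := (hceq _).mpr he
      obtain ⟨q, hqpath, hqne, hqlen, hqsup, hqedges⟩ := cycle_split (c.rotate v hv) hc0 he0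
      have hqG : ∀ e ∈ q.edges, e ∈ G.edgeSet := by
        intro e hee
        have h1 := q.edges_subset_edgeSet hee
        rw [SimpleGraph.edgeSet_sup, Set.mem_union] at h1
        rcases h1 with h1 | h1
        · exact h1
        · exfalso
          rw [SimpleGraph.edgeSet_fromEdgeSet, Set.mem_diff, Set.mem_singleton_iff] at h1
          exact hqne (h1.1 ▸ hee)
      by_cases hchd : ∃ a b : V, a ∈ (q.transfer G hqG).support ∧ b ∈ (q.transfer G hqG).support ∧
          G.Adj a b ∧ s(a, b) ∉ (q.transfer G hqG).edges
      · obtain ⟨a, b, ha, hb, hab, habn⟩ := hchd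
        rw [Walk.support_transfer] at ha hb
        rw [Walk.edges_transfer] at habn
        refine ⟨a, b, (hcsup a).mp (hqsup a ha), (hcsup b).mp (hqsup b hb), hGle a b hab, ?_⟩
        intro hmem
        rcases (hqedges _).mp ((hceq _).mpr hmem) with h1 | h1
        · rw [Sym2.eq_iff] at h1
          rcases h1 with ⟨rfl, rfl⟩ | ⟨rfl, rfl⟩
          · exact hnadj hab
          · exact hnadj hab.symm
        · exact habn h1
      · exfalso
        push_neg at hchd
        have hqind : IsInd (q.transfer G hqG) := by
          refine ⟨Walk.IsPath.transfer hqG hqpath, ?_⟩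
          intro a b ha hb hab
          by_contra hn
          exact hn (hchd a b ha hb hab)
        have h2 := hnoind (q.transfer G hqG).reverse hqind.reverse
        rw [Walk.length_reverse, Walk.length_transfer] at h2
        omega
    · -- the cycle lies in G
      have hsub : ∀ e ∈ c.edges, e ∈ G.edgeSet := by
        intro e hee
        have h1 := c.edges_subset_edgeSet hee
        rw [SimpleGraph.edgeSet_sup, Set.mem_union] at h1
        rcases h1 with h1 | h1
        · exact h1
        · exfalso
          rw [SimpleGraph.edgeSet_fromEdgeSet, Set.mem_diff, Set.mem_singleton_iff] at h1
          exact he (h1.1 ▸ hee)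
      obtain ⟨a, b, ha, hb, hab, habn⟩ := hchord (c.transfer G hsub) (hc.transfer hsub)
        (by rw [Walk.length_transfer]; exact hlen)
      rw [Walk.support_transfer] at ha hb
      rw [Walk.edges_transfer] at habn
      exact ⟨a, b, ha, hb, hGle a b hab, habn⟩
  · -- exposedness
    set S : Set V := {v, w} ∪ {x | G.Adj v x ∧ G.Adj x w} with hSdef
    have hvS : v ∈ S := Or.inl (Or.inl rfl)
    have hwS : w ∈ S := Or.inl (Or.inr rfl)
    have hSmem : ∀ z : V, z ∈ S ↔ z = v ∨ z = w ∨ (G.Adj v z ∧ G.Adj z w) := by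
      intro z
      rw [hSdef]
      simp only [Set.mem_union, Set.mem_insert_iff, Set.mem_singleton_iff, Set.mem_setOf_eq]
      tauto
    have hSclique : G'.IsClique S := by
      intro a ha b hb hneq
      rcases (hSmem a).mp ha with rfl | rfl | ⟨ha1, ha2⟩
      · rcases (hSmem b).mp hb with rfl | rfl | ⟨hb1, hb2⟩
        · exact absurd rfl hneq
        · exact hvwG'
        · exact hGle _ _ hb1
      · rcases (hSmem b).mp hb with rfl | rfl | ⟨hb1, hb2⟩
        · exact hvwG'.symm
        · exact absurd rfl hneq
        · exact hGle _ _ hb2.symm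
      · rcases (hSmem b).mp hb with rfl | rfl | ⟨hb1, hb2⟩
        · exact hGle _ _ ha1.symm
        · exact hGle _ _ ha2
        · exact hGle _ _ (common_adj hchord hne hnadj ha1 ha2 hb1 hb2 hneq)
    have hsubS : ∀ t : Set V, G'.IsClique t → v ∈ t → w ∈ t → t ⊆ S := by
      intro t ht htv htw z hz
      rw [hSmem]
      by_cases hzv : z = v
      · exact Or.inl hzv
      by_cases hzw : z = w
      · exact Or.inr (Or.inl hzw)
      have hzadjv : G'.Adj z v := ht hz htv hzv
      have hzadjw : G'.Adj z w := ht hz htw hzw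
      have h1 : G.Adj z v := hG'toG z v hzadjv (Or.inl hzv) (Or.inl hzw)
      have h2 : G.Adj z w := hG'toG z w hzadjw (Or.inl hzv) (Or.inl hzw)
      exact Or.inr (Or.inr ⟨h1.symm, h2⟩)
    have hmaxS : IsMaxClique G' S := by
      refine ⟨hSclique, ?_⟩
      intro t ht hSt
      exact Set.Subset.antisymm (hsubS t ht (hSt hvS) (hSt hwS)) hSt
    refine ⟨hvwG', ⟨S, ⟨hmaxS, hvS, hwS⟩, ?_⟩, ?_⟩
    · rintro t ⟨htmax, htv, htw⟩
      exact (htmax.2 S hSclique (hsubS t htmax.1 htv htw)).symm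
    · rintro ⟨-, hmc⟩
      have huv : u ≠ v := fun h => G.loopless.irrefl v (h ▸ hu1)
      have huw : u ≠ w := fun h => G.loopless.irrefl w (h ▸ hu2)
      have hclique3 : G'.IsClique {v, w, u} := by
        intro a ha b hb hneq
        simp only [Set.mem_insert_iff, Set.mem_singleton_iff] at ha hb
        rcases ha with rfl | rfl | rfl
        · rcases hb with rfl | rfl | rfl
          · exact absurd rfl hneq
          · exact hvwG'
          · exact hGle _ _ hu1
        · rcases hb with rfl | rfl | rfl
          · exact hvwG'.symm
          · exact absurd rfl hneq
          · exact hGle _ _ hu2.symm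
        · rcases hb with rfl | rfl | rfl
          · exact hGle _ _ hu1.symm
          · exact hGle _ _ hu2
          · exact absurd rfl hneq
      have heq := hmc.2 {v, w, u} hclique3
        (by
          intro z hz
          simp only [Set.mem_insert_iff, Set.mem_singleton_iff] at hz ⊢
          tauto)
      have humem : u ∈ ({v, w} : Set V) := by
        rw [← heq]
        simp
      simp only [Set.mem_insert_iff, Set.mem_singleton_iff] at humem
      rcases humem with h | h
      · exact huv h
      · exact huw h
end

section
/- Let H be a finite simple graph on a nonempty vertex set V. Then H can be obtained from the complete graph on V through a finite sequence of erasures (where each step deletes a single exposed edge of the current graph) if and only if H is connected and chordal. -/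
variable {V : Type*}

open SimpleGraph

namespace ErasureAux

open SimpleGraph.Walk

variable {G : SimpleGraph V}

/-- Choose a minimal-length walk satisfying `P`. -/
lemma exists_min_walk {x y : V} (P : G.Walk x y → Prop) (h : ∃ p, P p) :
    ∃ p, P p ∧ ∀ q, P q → p.length ≤ q.length := by
  classical
  have hN : ∃ n : ℕ, ∃ p, P p ∧ p.length = n := ⟨h.choose.length, h.choose, h.choose_spec, rfl⟩
  obtain ⟨p, hp, hlen⟩ := Nat.find_spec hN
  exact ⟨p, hp, fun q hq => hlen ▸ Nat.find_min' hN ⟨q, hq, rfl⟩⟩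

lemma edges_of_length_one {u v : V} {p : G.Walk u v} (h : p.length = 1) :
    p.edges = [s(u, v)] := by
  cases p with
  | nil => simp at h
  | cons ha q =>
    cases q with
    | nil => simp
    | cons hb r => simp [Walk.length_cons] at h

/-- Shortcut a walk along a chord `ab` starting at the head. -/
lemma chord_shortcut_head {x y b : V} (p : G.Walk x y) (hxb : G.Adj x b)
    (hb : b ∈ p.support) (hne : s(x, b) ∉ p.edges) :
    ∃ q : G.Walk x y, q.length < p.length ∧ (∀ z ∈ q.support, z ∈ p.support) ∧
      (∀ e ∈ q.edges, e = s(x, b) ∨ e ∈ p.edges) := by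
  classical
  refine ⟨Walk.cons hxb (p.dropUntil b hb), ?_, ?_, ?_⟩
  · have hspec := p.take_spec hb
    have hlen : (p.takeUntil b hb).length + (p.dropUntil b hb).length = p.length := by
      rw [← Walk.length_append, hspec]
    have h2 : 2 ≤ (p.takeUntil b hb).length := by
      by_contra hlt
      push_neg at hlt
      interval_cases h : (p.takeUntil b hb).length
      · have : x = b := by
          have := Walk.eq_of_length_eq_zero h
          exact this
        exact hxb.ne this
      · have := edges_of_length_one (p := p.takeUntil b hb) h
        have : s(x, b) ∈ (p.takeUntil b hb).edges := by rw [this]; simp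
        exact hne (Walk.edges_takeUntil_subset p hb this)
    rw [Walk.length_cons]
    omega
  · intro z hz
    simp only [Walk.support_cons, List.mem_cons] at hz
    rcases hz with hz | hz
    · simp [hz, Walk.start_mem_support]
    · exact Walk.support_dropUntil_subset p hb hz
  · intro e he
    simp only [Walk.edges_cons, List.mem_cons] at he
    rcases he with he | he
    · exact Or.inl he
    · exact Or.inr (Walk.edges_dropUntil_subset p hb he)

/-- Shortcut a walk along a chord. -/
lemma chord_shortcut {x y : V} (p : G.Walk x y) {a b : V} (hab : G.Adj a b)
    (ha : a ∈ p.support) (hb : b ∈ p.support) (hne : s(a, b) ∉ p.edges) :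
    ∃ q : G.Walk x y, q.length < p.length ∧ (∀ z ∈ q.support, z ∈ p.support) ∧
      (∀ e ∈ q.edges, e = s(a, b) ∨ e ∈ p.edges) := by
  classical
  induction p with
  | nil =>
    simp only [Walk.support_nil, List.mem_singleton] at ha hb
    subst ha; subst hb; exact absurd rfl hab.ne
  | @cons x z y h p ih =>
    simp only [Walk.support_cons, List.mem_cons] at ha hb
    rcases ha with ha | ha
    · subst ha
      rcases hb with hb | hb
      · exact absurd hb.symm hab.ne
      · exact chord_shortcut_head (Walk.cons h p) hab (by simp [hb]) hne
    · rcases hb with hb | hb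
      · subst hb
        have := chord_shortcut_head (Walk.cons h p) hab.symm (by simp [ha])
          (by rwa [Sym2.eq_swap])
        obtain ⟨q, h1, h2, h3⟩ := this
        exact ⟨q, h1, h2, fun e he => by
          rcases h3 e he with he' | he'
          · exact Or.inl (by rw [he', Sym2.eq_swap])
          · exact Or.inr he'⟩
      · have hne' : s(a, b) ∉ p.edges := fun hc => hne (by simp [Walk.edges_cons, hc])
        obtain ⟨q, h1, h2, h3⟩ := ih ha hb hne'
        refine ⟨Walk.cons h q, ?_, ?_, ?_⟩
        · simpa [Walk.length_cons] using Nat.succ_lt_succ h1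
        · intro z' hz'
          simp only [Walk.support_cons, List.mem_cons] at hz' ⊢
          rcases hz' with hz' | hz'
          · simp [hz']
          · simp [h2 z' hz']
        · intro e he
          simp only [Walk.edges_cons, List.mem_cons] at he
          rcases he with he | he
          · exact Or.inr (by simp [Walk.edges_cons, he])
          · rcases h3 e he with he' | he'
            · exact Or.inl he'
            · exact Or.inr (by simp [Walk.edges_cons, he'])

/-- If a path starts at `x` and contains an edge `s(x,a)`, that edge is its first edge. -/
lemma edge_head {x w a : V} {p : G.Walk x w} (hp : p.support.Nodup) (he : s(x, a) ∈ p.edges) :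
    ∃ (h : G.Adj x a) (r : G.Walk a w), p = Walk.cons h r ∧ s(x, a) ∉ r.edges := by
  cases p with
  | nil => simp at he
  | @cons x z w h r =>
    simp only [Walk.edges_cons, List.mem_cons] at he
    rw [Walk.support_cons, List.nodup_cons] at hp
    rcases he with he | he
    · have : a = z := Sym2.congr_right.mp he
      subst this
      exact ⟨h, r, rfl, fun hc => hp.1 (Walk.fst_mem_support_of_mem_edges r hc)⟩
    · exact absurd (Walk.fst_mem_support_of_mem_edges r he) hp.1

lemma adj_of_walk_pair {a b : V} (hne : a ≠ b) (p : G.Walk a b)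
    (hs : ∀ z ∈ p.support, z = a ∨ z = b) : G.Adj a b := by
  cases p with
  | nil => exact absurd rfl hne
  | @cons a z b h p =>
    rcases hs z (by simp) with hz | hz
    · exact absurd hz h.ne'
    · exact hz ▸ h

lemma exists_maxclique_containing [Finite V] (G : SimpleGraph V) {t : Set V}
    (ht : G.IsClique t) : ∃ s, IsMaxClique G s ∧ t ⊆ s := by
  classical
  have hfin : {s : Set V | G.IsClique s ∧ t ⊆ s}.Finite := Set.toFinite _
  obtain ⟨m, ⟨hm, htm⟩, hmax⟩ := hfin.exists_maximal ⟨t, ht, subset_rfl⟩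
  exact ⟨m, ⟨hm, fun t' ht' hsub => Set.Subset.antisymm (hmax ⟨ht', htm.trans hsub⟩ hsub) hsub⟩, htm⟩


lemma dup_support_of_nonnil {a : V} {w : G.Walk a a} (h : w.length ≠ 0) :
    ¬ w.support.Nodup := by
  cases w with
  | nil => simp at h
  | cons h' r =>
    intro hn
    rw [Walk.support_cons, List.nodup_cons] at hn
    exact hn.1 (Walk.end_mem_support r)

lemma dup_support_of_eq {c d : V} (w : G.Walk c d) (hcd : c = d) (h : w.length ≠ 0) :
    ¬w.support.Nodup := by
  subst hcd
  exact dup_support_of_nonnil h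

lemma isChordal_top : IsChordal (⊤ : SimpleGraph V) := by
  intro v w hw hlen
  cases w with
  | nil => simp at hlen
  | @cons v z1 _ h q =>
    cases q with
    | nil => simp at hlen
    | @cons z1 b _ h2 q2 =>
      have hcyc := hw
      rw [Walk.isCycle_def] at hcyc
      have hstail : (z1 :: q2.support).Nodup := by
        simpa [Walk.support_cons] using hcyc.2.2
      rw [List.nodup_cons] at hstail
      have hz1 : z1 ∉ q2.support := hstail.1
      have hq2nd : q2.support.Nodup := hstail.2
      have hq2len : 2 ≤ q2.length := by
        simp only [Walk.length_cons] at hlen; omega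
      have hvb : v ≠ b := by
        intro hvb
        subst hvb
        exact dup_support_of_nonnil (by omega) hq2nd
      refine ⟨v, b, by simp, ?_, by simpa using hvb, ?_⟩
      · simp [Walk.support_cons, Walk.start_mem_support]
      · simp only [Walk.edges_cons, List.mem_cons]
        push_neg
        refine ⟨?_, ?_, ?_⟩
        · intro hc
          have : b = z1 := Sym2.congr_right.mp hc
          exact hz1 (this ▸ Walk.start_mem_support q2)
        · intro hc
          have : v = z1 := Sym2.congr_left.mp hc
          exact h.ne this
        · intro hc
          rw [Sym2.eq_swap] at hc
          obtain ⟨hadj, r, hr, hnr⟩ := edge_head hq2nd hc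
          have : r.length ≠ 0 := by
            have : q2.length = r.length + 1 := by rw [hr, Walk.length_cons]
            omega
          have := dup_support_of_nonnil this
          rw [hr, Walk.support_cons, List.nodup_cons] at hq2nd
          exact this hq2nd.2

lemma isCycle_transfer {u : V} {p : G.Walk u u} {H : SimpleGraph V}
    (hp : ∀ e ∈ p.edges, e ∈ H.edgeSet) (h : p.IsCycle) : (p.transfer H hp).IsCycle := by
  rw [Walk.isCycle_def] at h ⊢
  refine ⟨?_, ?_, ?_⟩
  · rw [Walk.isTrail_def, Walk.edges_transfer]
    exact h.1.edges_nodup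
  · intro hn
    apply h.2.1
    have hl : p.length = 0 := by rw [← Walk.length_transfer p hp, hn]; simp
    cases p with
    | nil => rfl
    | cons _ _ => simp at hl
  · rw [Walk.support_transfer]; exact h.2.2

/-- Lemma A: in a chordal graph, an edge `xy` together with an `x`-`y` walk of length
at least two avoiding the edge yields a common neighbor of `x` and `y` on the walk. -/
lemma common_neighbor_of_walk (hG : IsChordal G) {x y : V} (hxy : G.Adj x y)
    (p : G.Walk x y) (hlen : 2 ≤ p.length) (hnp : s(x, y) ∉ p.edges) :
    ∃ z, z ∈ p.support ∧ z ≠ x ∧ z ≠ y ∧ G.Adj x z ∧ G.Adj y z := by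
  classical
  set P : G.Walk x y → Prop := fun q =>
    2 ≤ q.length ∧ s(x, y) ∉ q.edges ∧ ∀ z ∈ q.support, z ∈ p.support with hP
  obtain ⟨m, hm, hmin⟩ := exists_min_walk P ⟨p, hlen, hnp, fun z hz => hz⟩
  -- pass to the bypass, which is a path
  have hb2 : 2 ≤ m.bypass.length := by
    rcases Nat.lt_or_ge m.bypass.length 2 with hlt | hge
    · interval_cases hbl : m.bypass.length
      · exact absurd (Walk.eq_of_length_eq_zero hbl) hxy.ne
      · have := edges_of_length_one (p := m.bypass) hbl
        exact absurd (by rw [this]; simp) (fun hc => hm.2.1 (Walk.edges_bypass_subset m hc))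
    · exact hge
  have hmb : P m.bypass :=
    ⟨hb2, fun hc => hm.2.1 (Walk.edges_bypass_subset m hc),
      fun z hz => hm.2.2 z (Walk.support_bypass_subset m hz)⟩
  have hmblen : m.bypass.length ≤ m.length := Walk.length_bypass_le m
  have hminb : ∀ q, P q → m.bypass.length ≤ q.length := fun q hq =>
    le_trans hmblen (hmin q hq)
  have hpath : m.bypass.IsPath := Walk.bypass_isPath m
  set mb := m.bypass with hmbdef
  clear_value mb
  clear hmbdef hm hmin hmblen
  cases mb with
  | nil => simp at hb2
  | @cons x z _ h q =>
    by_cases hq1 : q.length = 1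
    · -- length two walk : middle vertex z works
      have hzy : G.Adj z y := by
        have := edges_of_length_one (p := q) hq1
        exact Walk.adj_of_mem_edges q (by rw [this]; simp)
      refine ⟨z, hmb.2.2 z (by simp [Walk.support_cons, Walk.start_mem_support]), h.ne', hzy.ne, h, hzy.symm⟩
    · -- length ≥ 3 : build cycle and use chordality to shorten; contradiction
      exfalso
      have hlen3 : 3 ≤ (Walk.cons h q).length := by
        rw [Walk.length_cons] at hb2 ⊢
        omega
      have hcyc : (Walk.cons hxy.symm (Walk.cons h q)).IsCycle := by
        rw [Walk.cons_isCycle_iff]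
        exact ⟨hpath, by rw [Sym2.eq_swap]; exact hmb.2.1⟩
      obtain ⟨a, b, ha, hb, hab, hnab⟩ := hG (Walk.cons hxy.symm (Walk.cons h q)) hcyc
        (by rw [Walk.length_cons]; omega)
      have hsupp : ∀ c, c ∈ (Walk.cons hxy.symm (Walk.cons h q)).support →
          c ∈ (Walk.cons h q).support := by
        intro c hc
        rw [Walk.support_cons, List.mem_cons] at hc
        rcases hc with hc | hc
        · rw [hc]; exact Walk.end_mem_support _
        · exact hc
      simp only [Walk.edges_cons, List.mem_cons] at hnab
      push_neg at hnab
      obtain ⟨q', hq'len, hq'supp, hq'edges⟩ := chord_shortcut (Walk.cons h q) hab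
        (hsupp a ha) (hsupp b hb)
        (by simp only [Walk.edges_cons, List.mem_cons]; push_neg; exact hnab.2)
      have hq'P : P q' := by
        refine ⟨?_, ?_, fun z' hz' => hmb.2.2 z' (hq'supp z' hz')⟩
        · rcases Nat.lt_or_ge q'.length 2 with hlt | hge
          · exfalso; interval_cases hql : q'.length
            · exact hxy.ne (Walk.eq_of_length_eq_zero hql)
            · have := edges_of_length_one (p := q') hql
              have hxyq : s(x, y) ∈ q'.edges := by rw [this]; simp
              rcases hq'edges _ hxyq with hc | hc
              · exact hnab.1 (by rw [← hc, Sym2.eq_swap])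
              · exact hmb.2.1 hc
          · exact hge
        · intro hc
          rcases hq'edges _ hc with hc' | hc'
          · exact hnab.1 (by rw [← hc', Sym2.eq_swap])
          · exact hmb.2.1 hc'
      exact absurd (hminb q' hq'P) (by omega)

/-- Splitting a cycle through the edge `xy` at that edge: an `x`-`y` path avoiding the
edge whose edges together with `s(x,y)` are the cycle's edges. -/
lemma cycle_edge_split {x y : V} (c : G.Walk x x) (hc : c.IsCycle)
    (he : s(x, y) ∈ c.edges) :
    ∃ q : G.Walk x y, q.IsPath ∧ s(x, y) ∉ q.edges ∧ q.length + 1 = c.length ∧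
      (∀ z ∈ q.support, z ∈ c.support) ∧ (∀ e ∈ c.edges, e = s(x, y) ∨ e ∈ q.edges) := by
  classical
  cases c with
  | nil => simp at he
  | @cons x z _ h q0 =>
    rw [Walk.cons_isCycle_iff] at hc
    by_cases hzy : z = y
    · subst hzy
      refine ⟨q0.reverse, hc.1.reverse, ?_, by simp, ?_, ?_⟩
      · rw [Walk.edges_reverse, List.mem_reverse]; exact hc.2
      · intro z' hz'
        rw [Walk.support_reverse, List.mem_reverse] at hz'
        simp [Walk.support_cons, hz']
      · intro e heq
        rw [Walk.edges_cons, List.mem_cons] at heq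
        rcases heq with heq | heq
        · exact Or.inl heq
        · exact Or.inr (by rw [Walk.edges_reverse, List.mem_reverse]; exact heq)
    · have hyq0 : s(x, y) ∈ q0.edges := by
        rw [Walk.edges_cons, List.mem_cons] at he
        rcases he with he | he
        · exact absurd (Sym2.congr_right.mp he).symm hzy
        · exact he
      have hq0rev : q0.reverse.support.Nodup := by
        rw [Walk.support_reverse, List.nodup_reverse]
        exact hc.1.support_nodup
      have hyrev : s(x, y) ∈ q0.reverse.edges := by
        rw [Walk.edges_reverse, List.mem_reverse]; exact hyq0
      obtain ⟨h2, r, hr, hnr⟩ := edge_head hq0rev hyrev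
      -- q0.reverse = cons h2 r with r : Walk y z
      refine ⟨Walk.cons h r.reverse, ?_, ?_, ?_, ?_, ?_⟩
      · rw [Walk.isPath_def, Walk.support_cons, List.nodup_cons]
        constructor
        · intro hx
          rw [Walk.support_reverse, List.mem_reverse] at hx
          have : x ∈ q0.reverse.support := by
            rw [hr, Walk.support_cons]; exact List.mem_cons_of_mem _ hx
          rw [hr, Walk.support_cons, List.nodup_cons] at hq0rev
          exact hq0rev.1 hx
        · rw [Walk.support_reverse, List.nodup_reverse]
          rw [hr, Walk.support_cons, List.nodup_cons] at hq0rev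
          exact hq0rev.2
      · rw [Walk.edges_cons, List.mem_cons]
        push_neg
        constructor
        · intro hcon
          exact hzy (Sym2.congr_right.mp hcon).symm
        · rw [Walk.edges_reverse, List.mem_reverse]
          exact hnr
      · have hl : q0.reverse.length = r.length + 1 := by rw [hr, Walk.length_cons]
        rw [Walk.length_reverse] at hl
        rw [Walk.length_cons, Walk.length_cons, Walk.length_reverse]
        omega
      · intro z' hz'
        rw [Walk.support_cons, List.mem_cons] at hz'
        rcases hz' with hz' | hz'
        · rw [hz']; exact Walk.start_mem_support _
        · rw [Walk.support_reverse, List.mem_reverse] at hz'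
          have : z' ∈ q0.reverse.support := by
            rw [hr, Walk.support_cons]; exact List.mem_cons_of_mem _ hz'
          rw [Walk.support_reverse, List.mem_reverse] at this
          simp [Walk.support_cons, this]
      · intro e heq
        rw [Walk.edges_cons, List.mem_cons] at heq
        rcases heq with heq | heq
        · right; rw [heq, Walk.edges_cons]; exact List.mem_cons_self
        · have : e ∈ q0.reverse.edges := by
            rw [Walk.edges_reverse, List.mem_reverse]; exact heq
          rw [hr, Walk.edges_cons, List.mem_cons] at this
          rcases this with hthis | hthis
          · exact Or.inl hthis
          · right
            rw [Walk.edges_cons, List.mem_cons]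
            right
            rw [Walk.edges_reverse, List.mem_reverse]
            exact hthis


lemma triangle_isClique {x y z : V} (hxy : G.Adj x y) (hxz : G.Adj x z) (hyz : G.Adj y z) :
    G.IsClique {x, y, z} := by
  intro a ha b hb hne
  simp only [Set.mem_insert_iff, Set.mem_singleton_iff] at ha hb
  rcases ha with rfl | rfl | rfl <;> rcases hb with rfl | rfl | rfl <;>
    first
      | exact absurd rfl hne
      | assumption
      | exact hxy.symm
      | exact hxz.symm
      | exact hyz.symm

lemma exposed_structure [Finite V] {x y : V} (hG : IsExposedEdge G x y) :
    ∃ s : Set V, IsMaxClique G s ∧ x ∈ s ∧ y ∈ s ∧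
      (∀ t, IsMaxClique G t → x ∈ t → y ∈ t → t = s) ∧ ∃ z ∈ s, z ≠ x ∧ z ≠ y := by
  obtain ⟨hadj, ⟨s, hs, huniq⟩, hnf⟩ := hG
  have hxs : x ∈ s := hs.2.1
  have hys : y ∈ s := hs.2.2
  have hmax := hs.1
  have hnmax : ¬ IsMaxClique G {x, y} := fun hm => hnf ⟨hadj, hm⟩
  have hpair : G.IsClique {x, y} := by
    intro a ha b hb hne
    simp only [Set.mem_insert_iff, Set.mem_singleton_iff] at ha hb
    rcases ha with rfl | rfl <;> rcases hb with rfl | rfl <;>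
      first
        | exact absurd rfl hne
        | exact hadj
        | exact hadj.symm
  have : ∃ t : Set V, G.IsClique t ∧ {x, y} ⊆ t ∧ t ≠ {x, y} := by
    by_contra hcon
    push_neg at hcon
    exact hnmax ⟨hpair, fun t ht hsub => hcon t ht hsub⟩
  obtain ⟨t, ht, hsub, htne⟩ := this
  obtain ⟨t', ht', htt'⟩ := exists_maxclique_containing G ht
  have ht's : t' = s := huniq t' ⟨ht', htt' (hsub (by simp)), htt' (hsub (by simp))⟩
  obtain ⟨z, hzt, hz⟩ := Set.exists_of_ssubset (ssubset_of_subset_of_ne hsub htne.symm)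
  simp only [Set.mem_insert_iff, Set.mem_singleton_iff] at hz
  push_neg at hz
  exact ⟨s, hmax, hxs, hys, fun t'' ht'' hx'' hy'' => huniq t'' ⟨ht'', hx'', hy''⟩,
    z, ht's ▸ htt' hzt, hz.1, hz.2⟩

lemma mem_tail_of_closed {v z : V} {w : G.Walk v v} (h : w.length ≠ 0)
    (hz : z ∈ w.support) : z ∈ w.support.tail := by
  cases w with
  | nil => simp at h
  | cons h' p =>
    rw [Walk.support_cons, List.mem_cons] at hz
    rw [Walk.support_cons]
    rcases hz with rfl | hz
    · exact Walk.end_mem_support p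
    · exact hz

/-- Erasures preserve connectedness and chordality. -/
lemma erasure_preserves [Finite V] {G H : SimpleGraph V} (hE : Erasure G H)
    (hconn : G.Connected) (hch : IsChordal G) : H.Connected ∧ IsChordal H := by
  classical
  obtain ⟨x, y, hexp, rfl⟩ := hE
  have hGxy : G.Adj x y := hexp.1
  obtain ⟨S, hSmax, hxS, hyS, hSuniq, z0, hz0S, hz0x, hz0y⟩ := exposed_structure hexp
  have hxz0 : G.Adj x z0 := hSmax.1 hxS hz0S (Ne.symm hz0x)
  have hyz0 : G.Adj y z0 := hSmax.1 hyS hz0S (Ne.symm hz0y)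
  set H := G.deleteEdges {s(x, y)} with hHdef
  have hHadj : ∀ {a b : V}, G.Adj a b → s(a, b) ≠ s(x, y) → H.Adj a b := by
    intro a b h hne
    rw [hHdef, SimpleGraph.deleteEdges_adj]
    exact ⟨h, by simpa using hne⟩
  have hreachxy : H.Reachable x y := by
    have h1 : H.Adj x z0 := hHadj hxz0 (by
      intro hc
      rw [Sym2.eq_iff] at hc
      rcases hc with ⟨_, h2⟩ | ⟨h2, _⟩
      · exact hz0y h2
      · exact hGxy.ne h2)
    have h2 : H.Adj z0 y := (hHadj hyz0 (by
      intro hc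
      rw [Sym2.eq_iff] at hc
      rcases hc with ⟨_, h3⟩ | ⟨_, h3⟩
      · exact hz0y h3
      · exact hz0x h3)).symm
    exact (h1.reachable).trans h2.reachable
  constructor
  · -- connectedness
    have key : ∀ a b : V, G.Adj a b → H.Reachable a b := by
      intro a b h
      by_cases heq : s(a, b) = s(x, y)
      · rw [Sym2.eq_iff] at heq
        rcases heq with ⟨rfl, rfl⟩ | ⟨rfl, rfl⟩
        · exact hreachxy
        · exact hreachxy.symm
      · exact (hHadj h heq).reachable
    haveI : Nonempty V := hconn.nonempty
    refine ⟨fun a b => ?_⟩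
    obtain ⟨w⟩ := hconn.preconnected a b
    induction w with
    | nil => exact Reachable.refl _
    | cons h p ih => exact (key _ _ h).trans ih
  · -- chordality
    intro v w hw hlen4
    have hsubG : ∀ e ∈ w.edges, e ∈ G.edgeSet := by
      intro e he
      have := Walk.edges_subset_edgeSet w he
      rw [hHdef] at this
      exact (SimpleGraph.edgeSet_deleteEdges _ ▸ this).1
    set wG := w.transfer G hsubG with hwGdef
    have hwGcyc : wG.IsCycle := isCycle_transfer _ hw
    have hwGsupp : wG.support = w.support := Walk.support_transfer _ _
    have hwGedges : wG.edges = w.edges := Walk.edges_transfer _ _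
    obtain ⟨a, b, ha, hb, hab, hnab⟩ := hch wG hwGcyc
      (by rw [Walk.length_transfer]; exact hlen4)
    by_cases heq : s(a, b) = s(x, y)
    · -- the only G-chord is the erased edge xy : find an H-chord z1 z2
      have hxw : x ∈ wG.support := by
        have : a ∈ s(a, b) := Sym2.mem_mk_left a b
        rw [heq, Sym2.mem_iff] at this
        rcases this with rfl | rfl
        · exact ha
        · have : b ∈ s(a, b) := Sym2.mem_mk_right a b
          rw [heq, Sym2.mem_iff] at this
          rcases this with rfl | rfl
          · exact hb
          · exact absurd rfl hab.ne
      have hyw : y ∈ wG.support := by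
        have : b ∈ s(a, b) := Sym2.mem_mk_right a b
        rw [heq, Sym2.mem_iff] at this
        rcases this with rfl | rfl
        · have : a ∈ s(a, b) := Sym2.mem_mk_left a b
          rw [heq, Sym2.mem_iff] at this
          rcases this with rfl | rfl
          · exact absurd rfl hab.ne
          · exact ha
        · exact hb
      have hxyE : s(x, y) ∉ wG.edges := heq ▸ hnab
      -- rotate the cycle to start at x
      set c := wG.rotate x hxw with hcdef
      have hccyc : c.IsCycle := hwGcyc.rotate hxw
      have hclen : c.length ≠ 0 := by
        have := hccyc.three_le_length; omega
      have hwGlen : wG.length ≠ 0 := by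
        have := hwGcyc.three_le_length; omega
      have hrot : c.support.tail ~r wG.support.tail := Walk.support_rotate wG x hxw
      have hrotE : c.edges ~r wG.edges := Walk.rotate_edges wG x hxw
      have hmemc : ∀ z : V, z ∈ c.support ↔ z ∈ wG.support := by
        intro z
        constructor
        · intro h
          have := (hrot.mem_iff).mp (mem_tail_of_closed hclen h)
          exact List.mem_of_mem_tail this
        · intro h
          have := (hrot.mem_iff).mpr (mem_tail_of_closed hwGlen h)
          exact List.mem_of_mem_tail this
      have hyc : y ∈ c.support := (hmemc y).mpr hyw
      have hxyEc : s(x, y) ∉ c.edges := fun hc => hxyE (hrotE.mem_iff.mp hc)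
      -- split the cycle at y
      set P1 := c.takeUntil y hyc with hP1def
      set D := c.dropUntil y hyc with hDdef
      have hspec : P1.append D = c := Walk.take_spec c hyc
      have hP1edges : P1.edges ⊆ c.edges := Walk.edges_takeUntil_subset c hyc
      have hDedges : D.edges ⊆ c.edges := Walk.edges_dropUntil_subset c hyc
      have hP1len : 2 ≤ P1.length := by
        rcases Nat.lt_or_ge P1.length 2 with hlt | hge
        · exfalso
          interval_cases hl : P1.length
          · exact hGxy.ne (Walk.eq_of_length_eq_zero hl)
          · have := edges_of_length_one (p := P1) hl
            exact hxyEc (hP1edges (by rw [this]; simp))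
        · exact hge
      have hDlen : 2 ≤ D.length := by
        rcases Nat.lt_or_ge D.length 2 with hlt | hge
        · exfalso
          interval_cases hl : D.length
          · exact hGxy.ne (Walk.eq_of_length_eq_zero hl).symm
          · have := edges_of_length_one (p := D) hl
            apply hxyEc (hDedges (by rw [this]; simp [Sym2.eq_swap]))
        · exact hge
      have hxyP1 : s(x, y) ∉ P1.edges := fun hc => hxyEc (hP1edges hc)
      have hxyD : s(x, y) ∉ D.reverse.edges := by
        rw [Walk.edges_reverse, List.mem_reverse]
        exact fun hc => hxyEc (hDedges hc)
      obtain ⟨z1, hz1P, hz1x, hz1y, hxz1, hyz1⟩ :=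
        common_neighbor_of_walk hch hGxy P1 hP1len hxyP1
      obtain ⟨z2, hz2P, hz2x, hz2y, hxz2, hyz2⟩ :=
        common_neighbor_of_walk hch hGxy D.reverse (by rwa [Walk.length_reverse]) hxyD
      have hz2D : z2 ∈ D.support := by
        rw [Walk.support_reverse, List.mem_reverse] at hz2P
        exact hz2P
      -- nodup structure of the cycle support
      have hcsupp : c.support = P1.support ++ D.support.tail := by
        rw [← hspec, Walk.support_append]
      have hP1head : P1.support = x :: P1.support.tail := by
        have := Walk.support_eq_cons P1
        exact this
      have hnd : (P1.support.tail ++ D.support.tail).Nodup := by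
        have := hccyc.support_nodup
        rw [hcsupp, hP1head] at this
        simpa using this
      rw [List.nodup_append] at hnd
      have hz1tail : z1 ∈ P1.support.tail := by
        rcases (Walk.mem_support_iff P1).mp hz1P with h | h
        · exact absurd h hz1x
        · exact h
      have hz2tail : z2 ∈ D.support.tail := by
        rcases (Walk.mem_support_iff D).mp hz2D with h | h
        · exact absurd h hz2y
        · exact h
      have hz12 : z1 ≠ z2 := fun hc => hnd.2.2 _ hz1tail _ hz2tail hc
      -- z1 and z2 both lie in the unique maximal clique S, hence are adjacent
      have hz1S : z1 ∈ S := by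
        obtain ⟨t', ht', hsub⟩ :=
          exists_maxclique_containing G (triangle_isClique hGxy hxz1 hyz1)
        have := hSuniq t' ht' (hsub (by simp)) (hsub (by simp))
        exact this ▸ hsub (by simp)
      have hz2S : z2 ∈ S := by
        obtain ⟨t', ht', hsub⟩ :=
          exists_maxclique_containing G (triangle_isClique hGxy hxz2 hyz2)
        have := hSuniq t' ht' (hsub (by simp)) (hsub (by simp))
        exact this ▸ hsub (by simp)
      have hadj12 : G.Adj z1 z2 := hSmax.1 hz1S hz2S hz12
      have hne12 : s(z1, z2) ≠ s(x, y) := by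
        intro hc
        rw [Sym2.eq_iff] at hc
        rcases hc with ⟨h1, _⟩ | ⟨h1, _⟩
        · exact hz1x h1
        · exact hz1y h1
      refine ⟨z1, z2, ?_, ?_, hHadj hadj12 hne12, ?_⟩
      · rw [← hwGsupp, ← hmemc]
        rw [hcsupp]
        exact List.mem_append_left _ hz1P
      · rw [← hwGsupp, ← hmemc]
        rw [hcsupp]
        exact List.mem_append_right _ hz2tail
      · -- the edge z1 z2 is not an edge of the cycle
        intro hc
        rw [← hwGedges] at hc
        have hcc : s(z1, z2) ∈ c.edges := hrotE.mem_iff.mpr hc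
        rw [← hspec, Walk.edges_append, List.mem_append] at hcc
        rcases hcc with hcc | hcc
        · have : z2 ∈ P1.support := Walk.snd_mem_support_of_mem_edges P1 hcc
          have hz2tl : z2 ∈ P1.support.tail := by
            rcases (Walk.mem_support_iff P1).mp this with h | h
            · exact absurd h hz2x
            · exact h
          exact hnd.2.2 _ hz2tl _ hz2tail rfl
        · have : z1 ∈ D.support := Walk.fst_mem_support_of_mem_edges D hcc
          have hz1tl : z1 ∈ D.support.tail := by
            rcases (Walk.mem_support_iff D).mp this with h | h
            · exact absurd h hz1y
            · exact h
          exact hnd.2.2 _ hz1tail _ hz1tl rfl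
    · -- the chord survives in H
      refine ⟨a, b, ?_, ?_, hHadj hab heq, ?_⟩
      · rwa [hwGsupp] at ha
      · rwa [hwGsupp] at hb
      · rwa [hwGedges] at hnab

lemma forward_direction [Fintype V] [Nonempty V] {H : SimpleGraph V}
    (h : Relation.ReflTransGen Erasure (⊤ : SimpleGraph V) H) :
    H.Connected ∧ IsChordal H := by
  induction h with
  | refl => exact ⟨SimpleGraph.connected_top, isChordal_top⟩
  | tail _ hstep ih => exact erasure_preserves hstep ih.1 ih.2


/-! ### Infrastructure for Dirac's theorem -/

/-- Reachability within a vertex set. -/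
def RW (G : SimpleGraph V) (u : Set V) (a b : V) : Prop :=
  ∃ p : G.Walk a b, ∀ z ∈ p.support, z ∈ u

lemma RW.refl {u : Set V} {a : V} (ha : a ∈ u) : RW G u a a :=
  ⟨Walk.nil, by simp [ha]⟩

lemma RW.symm {u : Set V} {a b : V} (h : RW G u a b) : RW G u b a := by
  obtain ⟨p, hp⟩ := h
  exact ⟨p.reverse, fun z hz => hp z (by rwa [Walk.support_reverse, List.mem_reverse] at hz)⟩

lemma RW.trans {u : Set V} {a b c : V} (h1 : RW G u a b) (h2 : RW G u b c) : RW G u a c := by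
  obtain ⟨p, hp⟩ := h1
  obtain ⟨q, hq⟩ := h2
  refine ⟨p.append q, fun z hz => ?_⟩
  rw [Walk.support_append, List.mem_append] at hz
  rcases hz with hz | hz
  · exact hp z hz
  · exact hq z (List.mem_of_mem_tail hz)

lemma RW.adj {u : Set V} {a b : V} (h : G.Adj a b) (ha : a ∈ u) (hb : b ∈ u) :
    RW G u a b := by
  refine ⟨Walk.cons h Walk.nil, fun z hz => ?_⟩
  simp only [Walk.support_cons, Walk.support_nil, List.mem_cons, List.mem_singleton,
    List.not_mem_nil, or_false] at hz
  rcases hz with rfl | rfl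
  · exact ha
  · exact hb

/-- `x` is simplicial within `s`. -/
def SimpIn (G : SimpleGraph V) (s : Set V) (x : V) : Prop :=
  x ∈ s ∧ ∀ ⦃a b : V⦄, a ∈ s → b ∈ s → G.Adj x a → G.Adj x b → a ≠ b → G.Adj a b

/-- `s` induces a complete graph. -/
def CompleteOn (G : SimpleGraph V) (s : Set V) : Prop :=
  ∀ ⦃a b : V⦄, a ∈ s → b ∈ s → a ≠ b → G.Adj a b

lemma SimpIn.of_completeOn {s : Set V} (h : CompleteOn G s) {x : V} (hx : x ∈ s) :
    SimpIn G s x :=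
  ⟨hx, fun _ _ ha hb _ _ hne => h ha hb hne⟩

lemma exists_min_finset (P : Finset V → Prop) (h : ∃ T, P T) :
    ∃ T, P T ∧ ∀ T', P T' → T.card ≤ T'.card := by
  classical
  have hN : ∃ n : ℕ, ∃ T, P T ∧ T.card = n := ⟨h.choose.card, h.choose, h.choose_spec, rfl⟩
  obtain ⟨T, hT, hlen⟩ := Nat.find_spec hN
  exact ⟨T, hT, fun T' hT' => hlen ▸ Nat.find_min' hN ⟨T', hT', rfl⟩⟩

lemma end_mem_tail {c d : V} (w : G.Walk c d) (h : c ≠ d) : d ∈ w.support.tail := by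
  cases w with
  | nil => exact absurd rfl h
  | cons h' p => rw [Walk.support_cons]; exact Walk.end_mem_support p

/-- If a walk to `u` visits `u` only once (at its end), then the part before any
other vertex `z` avoids `u`. -/
lemma not_mem_takeUntil [DecidableEq V] {a u z : V} (P : G.Walk a u)
    (hcount : P.support.count u = 1) (hz : z ∈ P.support) (hzu : z ≠ u) :
    u ∉ (P.takeUntil z hz).support := by
  intro hu
  have hspec := P.take_spec hz
  have : P.support = (P.takeUntil z hz).support ++ (P.dropUntil z hz).support.tail := by
    rw [← Walk.support_append, hspec]
  rw [this, List.count_append] at hcount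
  have h1 : 1 ≤ List.count u (P.takeUntil z hz).support := List.count_pos_iff.mpr hu
  have h2 : 1 ≤ List.count u (P.dropUntil z hz).support.tail :=
    List.count_pos_iff.mpr (end_mem_tail _ hzu)
  omega

/-- Attachment lemma: from a walk visiting `u` with all other vertices in `A`,
obtain a walk from `a` to `u` all of whose non-`u` vertices are in `A` and reachable
from `a` within `A`. -/
lemma attach_walk {a b u : V} {A : Set V} (W : G.Walk a b)
    (hW : ∀ z ∈ W.support, z = u ∨ z ∈ A) (hu : u ∈ W.support) :
    ∃ P : G.Walk a u, ∀ z ∈ P.support, z = u ∨ (z ∈ A ∧ RW G A a z) := by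
  classical
  refine ⟨W.takeUntil u hu, fun z hz => ?_⟩
  by_cases hzu : z = u
  · exact Or.inl hzu
  right
  have hzW : z ∈ W.support := Walk.support_takeUntil_subset W hu hz
  have hzA : z ∈ A := (hW z hzW).resolve_left hzu
  refine ⟨hzA, ?_⟩
  set P := W.takeUntil u hu with hPdef
  have hcount : P.support.count u = 1 := Walk.count_support_takeUntil_eq_one W hu
  have hufree : u ∉ (P.takeUntil z hz).support := not_mem_takeUntil P hcount hz hzu
  refine ⟨P.takeUntil z hz, fun z' hz' => ?_⟩
  have hz'W : z' ∈ W.support :=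
    Walk.support_takeUntil_subset W hu (Walk.support_takeUntil_subset P hz hz')
  rcases hW z' hz'W with rfl | hz'A
  · exact absurd hz' hufree
  · exact hz'A


lemma two_le_length_of_not_adj {u w : V} (q : G.Walk u w) (hne : u ≠ w)
    (hnadj : ¬G.Adj u w) : 2 ≤ q.length := by
  rcases Nat.lt_or_ge q.length 2 with hlt | hge
  · exfalso
    interval_cases hl : q.length
    · exact hne (Walk.eq_of_length_eq_zero hl)
    · exact hnadj (Walk.adj_of_mem_edges q (by rw [edges_of_length_one hl]; simp))
  · exact hge

/-- Dirac's theorem, relative form: within any finite vertex set of a chordal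
graph, either the set induces a complete graph or it contains two nonadjacent
simplicial (within the set) vertices. -/
theorem dirac [Fintype V] {G : SimpleGraph V} (hch : IsChordal G) :
    ∀ (n : ℕ) (s : Finset V), s.card ≤ n →
      CompleteOn G ↑s ∨
        ∃ x₁ x₂ : V, SimpIn G ↑s x₁ ∧ SimpIn G ↑s x₂ ∧ x₁ ≠ x₂ ∧ ¬G.Adj x₁ x₂ := by
  classical
  intro n
  induction n with
  | zero =>
    intro s hs
    left
    intro c d hc _ _
    rw [Finset.card_eq_zero.mp (Nat.le_zero.mp hs)] at hc
    simp at hc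
  | succ n ih =>
    intro s hs
    by_cases hcomp : CompleteOn G ↑s
    · exact Or.inl hcomp
    right
    obtain ⟨a, b, ha, hb, hne, hnadj⟩ :
        ∃ a b : V, a ∈ s ∧ b ∈ s ∧ a ≠ b ∧ ¬G.Adj a b := by
      unfold CompleteOn at hcomp
      push_neg at hcomp
      obtain ⟨a, b, ha, hb, hne, hnadj⟩ := hcomp
      exact ⟨a, b, ha, hb, hne, hnadj⟩
    -- a minimal (a,b)-separator T within s
    set SepP : Finset V → Prop := fun T =>
      T ⊆ s ∧ a ∉ T ∧ b ∉ T ∧ ¬ RW G (↑s \ ↑T) a b with hSepP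
    have hex : ∃ T, SepP T := by
      refine ⟨(s.erase a).erase b, (Finset.erase_subset _ _).trans (Finset.erase_subset _ _),
        ?_, ?_, ?_⟩
      · simp [Finset.mem_erase]
      · simp [Finset.mem_erase]
      · rintro ⟨p, hp⟩
        refine hnadj (adj_of_walk_pair hne p ?_)
        intro z hz
        have h1 := hp z hz
        rw [Set.mem_diff] at h1
        have h2 := h1.2
        simp only [Finset.coe_erase, Set.mem_diff, Set.mem_singleton_iff, not_and, not_not] at h2
        by_cases hza : z = a
        · exact Or.inl hza
        · exact Or.inr (h2 ⟨h1.1, hza⟩)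
    obtain ⟨T, hT, hTmin⟩ := exists_min_finset _ hex
    obtain ⟨hTs, haT, hbT, hTsep⟩ := hT
    set A0 : Set V := ↑s \ ↑T with hA0def
    have haA0 : a ∈ A0 := ⟨ha, haT⟩
    have hbA0 : b ∈ A0 := ⟨hb, hbT⟩
    set RA : Set V := {z | z ∈ A0 ∧ RW G A0 a z} with hRAdef
    set RB : Set V := {z | z ∈ A0 ∧ RW G A0 b z} with hRBdef
    have haRA : a ∈ RA := ⟨haA0, RW.refl haA0⟩
    have hbRB : b ∈ RB := ⟨hbA0, RW.refl hbA0⟩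
    have hdisj : ∀ z, z ∈ RA → z ∈ RB → False := fun z h1 h2 =>
      hTsep (h1.2.trans h2.2.symm)
    have hcross : ∀ z1 z2, z1 ∈ RA → z2 ∈ RB → G.Adj z1 z2 → False := by
      intro z1 z2 h1 h2 hadj
      exact hTsep ((h1.2.trans (RW.adj hadj h1.1 h2.1)).trans h2.2.symm)
    -- every separator vertex attaches to both sides
    have hattach : ∀ u ∈ T, (∃ P : G.Walk a u, ∀ z ∈ P.support, z = u ∨ z ∈ RA) ∧
        (∃ P : G.Walk b u, ∀ z ∈ P.support, z = u ∨ z ∈ RB) := by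
      intro u hu
      have hRW : RW G (↑s \ ↑(T.erase u)) a b := by
        by_contra hc
        have hcard := hTmin (T.erase u) ⟨(Finset.erase_subset _ _).trans hTs,
          fun h => haT (Finset.mem_of_mem_erase h),
          fun h => hbT (Finset.mem_of_mem_erase h), hc⟩
        have := Finset.card_erase_lt_of_mem hu
        omega
      obtain ⟨W, hW⟩ := hRW
      have hWmem : ∀ z ∈ W.support, z = u ∨ z ∈ A0 := by
        intro z hz
        have h1 := hW z hz
        rw [Set.mem_diff] at h1
        by_cases hzu : z = u
        · exact Or.inl hzu
        · refine Or.inr ⟨h1.1, fun hzT => h1.2 ?_⟩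
          simp only [Finset.coe_erase, Set.mem_diff, Set.mem_singleton_iff]
          exact ⟨hzT, hzu⟩
      have huW : u ∈ W.support := by
        by_contra huW
        exact hTsep ⟨W, fun z hz => (hWmem z hz).resolve_left (fun h => huW (h ▸ hz))⟩
      constructor
      · obtain ⟨P, hP⟩ := attach_walk W hWmem huW
        exact ⟨P, fun z hz => (hP z hz).imp id (fun h => ⟨h.1, h.2⟩)⟩
      · have huW' : u ∈ W.reverse.support := by
          rw [Walk.support_reverse, List.mem_reverse]; exact huW
        obtain ⟨P, hP⟩ := attach_walk W.reverse
          (fun z hz => hWmem z (by rwa [Walk.support_reverse, List.mem_reverse] at hz)) huW'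
        exact ⟨P, fun z hz => (hP z hz).imp id (fun h => ⟨h.1, h.2⟩)⟩
    -- T is a clique
    have hTclique : ∀ u w, u ∈ T → w ∈ T → u ≠ w → G.Adj u w := by
      intro u w hu hw hne2
      by_contra hnadj2
      obtain ⟨⟨Pau, hPau⟩, ⟨Pbu, hPbu⟩⟩ := hattach u hu
      obtain ⟨⟨Paw, hPaw⟩, ⟨Pbw, hPbw⟩⟩ := hattach w hw
      -- minimal u-w walks through each side
      set FA : G.Walk u w → Prop := fun q => ∀ z ∈ q.support, z = u ∨ z = w ∨ z ∈ RA with hFA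
      set FB : G.Walk u w → Prop := fun q => ∀ z ∈ q.support, z = u ∨ z = w ∨ z ∈ RB with hFB
      have hFAex : ∃ q, FA q := by
        refine ⟨Pau.reverse.append Paw, fun z hz => ?_⟩
        rw [Walk.support_append, List.mem_append] at hz
        rcases hz with hz | hz
        · rw [Walk.support_reverse, List.mem_reverse] at hz
          exact (hPau z hz).imp id (fun h => Or.inr h)
        · exact ((hPaw z (List.mem_of_mem_tail hz)).imp (fun h => h) (fun h => h)).symm.imp
            (fun h => h) (fun h => h) |>.elim (fun h => Or.inr (Or.inr h)) (fun h => Or.inr (Or.inl h))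
      have hFBex : ∃ q, FB q := by
        refine ⟨Pbu.reverse.append Pbw, fun z hz => ?_⟩
        rw [Walk.support_append, List.mem_append] at hz
        rcases hz with hz | hz
        · rw [Walk.support_reverse, List.mem_reverse] at hz
          exact (hPbu z hz).imp id (fun h => Or.inr h)
        · rcases hPbw z (List.mem_of_mem_tail hz) with h | h
          · exact Or.inr (Or.inl h)
          · exact Or.inr (Or.inr h)
      obtain ⟨mA, hmA, hminA⟩ := exists_min_walk FA hFAex
      obtain ⟨mB, hmB, hminB⟩ := exists_min_walk FB hFBex
      set QA := mA.bypass with hQAdef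
      set QB := mB.bypass with hQBdef
      have hQAF : FA QA := fun z hz => hmA z (Walk.support_bypass_subset _ hz)
      have hQBF : FB QB := fun z hz => hmB z (Walk.support_bypass_subset _ hz)
      have hQAmin : ∀ q, FA q → QA.length ≤ q.length := fun q hq =>
        le_trans (Walk.length_bypass_le _) (hminA q hq)
      have hQBmin : ∀ q, FB q → QB.length ≤ q.length := fun q hq =>
        le_trans (Walk.length_bypass_le _) (hminB q hq)
      have hQApath : QA.IsPath := Walk.bypass_isPath _
      have hQBpath : QB.IsPath := Walk.bypass_isPath _
      have hQAlen : 2 ≤ QA.length := two_le_length_of_not_adj QA hne2 hnadj2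
      have hQBlen : 2 ≤ QB.length := two_le_length_of_not_adj QB hne2 hnadj2
      have huRA : u ∉ RA := fun h => h.1.2 hu
      have huRB : u ∉ RB := fun h => h.1.2 hu
      have hwRA : w ∉ RA := fun h => h.1.2 hw
      have hwRB : w ∉ RB := fun h => h.1.2 hw
      have hQAQB : ∀ z, z ∈ QA.support → z ∈ QB.support → z = u ∨ z = w := by
        intro z h1 h2
        rcases hQAF z h1 with h | h | h
        · exact Or.inl h
        · exact Or.inr h
        · rcases hQBF z h2 with h' | h' | h'
          · exact Or.inl h'
          · exact Or.inr h'
          · exact absurd h' (fun h'' => hdisj z h h'')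
      -- shortcut contradiction machines
      have hshortA : ∀ a' b', a' ∈ QA.support → b' ∈ QA.support → G.Adj a' b' →
          s(a', b') ∉ QA.edges → False := by
        intro a' b' h1 h2 hadj hne'
        obtain ⟨q', hlen', hsupp', _⟩ := chord_shortcut QA hadj h1 h2 hne'
        have : FA q' := fun z hz => hQAF z (hsupp' z hz)
        exact absurd (hQAmin q' this) (by omega)
      have hshortB : ∀ a' b', a' ∈ QB.support → b' ∈ QB.support → G.Adj a' b' →
          s(a', b') ∉ QB.edges → False := by
        intro a' b' h1 h2 hadj hne'
        obtain ⟨q', hlen', hsupp', _⟩ := chord_shortcut QB hadj h1 h2 hne'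
        have : FB q' := fun z hz => hQBF z (hsupp' z hz)
        exact absurd (hQBmin q' this) (by omega)
      -- the cycle
      set C : G.Walk u u := QA.append QB.reverse with hCdef
      have hCsupp : C.support = QA.support ++ QB.reverse.support.tail :=
        Walk.support_append _ _
      have hCmem : ∀ z, z ∈ C.support → z ∈ QA.support ∨ z ∈ QB.support := by
        intro z hz
        rw [hCsupp, List.mem_append] at hz
        rcases hz with hz | hz
        · exact Or.inl hz
        · right
          have := List.mem_of_mem_tail hz
          rwa [Walk.support_reverse, List.mem_reverse] at this
      have hCedges : C.edges = QA.edges ++ QB.reverse.edges := Walk.edges_append _ _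
      have hCcyc : C.IsCycle := by
        rw [Walk.isCycle_def]
        refine ⟨?_, ?_, ?_⟩
        · rw [Walk.isTrail_def, hCedges]
          rw [List.nodup_append]
          refine ⟨hQApath.isTrail.edges_nodup, ?_, ?_⟩
          · rw [Walk.edges_reverse, List.nodup_reverse]
            exact hQBpath.isTrail.edges_nodup
          · rintro e he1 _ he2 rfl
            rw [Walk.edges_reverse, List.mem_reverse] at he2
            induction e with
            | h c d =>
              have hc1 : c ∈ QA.support := Walk.fst_mem_support_of_mem_edges _ he1
              have hd1 : d ∈ QA.support := Walk.snd_mem_support_of_mem_edges _ he1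
              have hc2 : c ∈ QB.support := Walk.fst_mem_support_of_mem_edges _ he2
              have hd2 : d ∈ QB.support := Walk.snd_mem_support_of_mem_edges _ he2
              have hcd : G.Adj c d := Walk.adj_of_mem_edges _ he1
              rcases hQAQB c hc1 hc2 with rfl | rfl <;>
                rcases hQAQB d hd1 hd2 with rfl | rfl
              · exact hcd.ne rfl
              · exact hnadj2 hcd
              · exact hnadj2 hcd.symm
              · exact hcd.ne rfl
        · intro hnil
          have : C.length = 0 := by rw [hnil]; rfl
          rw [hCdef, Walk.length_append, Walk.length_reverse] at this
          omega
        · have htail : C.support.tail = QA.support.tail ++ QB.reverse.support.tail := by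
            rw [hCsupp, Walk.support_eq_cons QA]
            rfl
          rw [htail, List.nodup_append]
          refine ⟨hQApath.support_nodup.tail, hQBpath.reverse.support_nodup.tail, ?_⟩
          rintro z hz1 _ hz2 rfl
          have hz1' : z ∈ QA.support := List.mem_of_mem_tail hz1
          have hz2' : z ∈ QB.support := by
            have := List.mem_of_mem_tail hz2
            rwa [Walk.support_reverse, List.mem_reverse] at this
          rcases hQAQB z hz1' hz2' with rfl | rfl
          · have : z ∉ QA.support.tail := by
              have := hQApath.support_nodup
              rw [Walk.support_eq_cons QA, List.nodup_cons] at this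
              exact this.1
            exact this hz1
          · have : z ∉ QB.reverse.support.tail := by
              have := hQBpath.reverse.support_nodup
              rw [Walk.support_eq_cons QB.reverse, List.nodup_cons] at this
              exact this.1
            exact this hz2
      obtain ⟨a', b', ha', hb', hadj', hnab'⟩ := hch C hCcyc
        (by rw [hCdef, Walk.length_append, Walk.length_reverse]; omega)
      have hnQA : s(a', b') ∉ QA.edges := fun h => hnab' (by rw [hCedges]; exact List.mem_append_left _ h)
      have hnQB : s(a', b') ∉ QB.edges := fun h => hnab' (by
        rw [hCedges]
        refine List.mem_append_right _ ?_
        rw [Walk.edges_reverse, List.mem_reverse]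
        exact h)
      rcases hCmem a' ha' with hA1 | hB1 <;> rcases hCmem b' hb' with hA2 | hB2
      · exact hshortA a' b' hA1 hA2 hadj' hnQA
      · -- a' in QA, b' in QB
        rcases hQAF a' hA1 with rfl | rfl | hRA'
        · exact hshortB a' b' (Walk.start_mem_support QB) hB2 hadj' hnQB
        · exact hshortB a' b' (Walk.end_mem_support QB) hB2 hadj' hnQB
        · rcases hQBF b' hB2 with rfl | rfl | hRB'
          · exact hshortA a' b' hA1 (Walk.start_mem_support QA) hadj' hnQA
          · exact hshortA a' b' hA1 (Walk.end_mem_support QA) hadj' hnQA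
          · exact hcross a' b' hRA' hRB' hadj'
      · -- a' in QB, b' in QA
        rcases hQAF b' hA2 with rfl | rfl | hRA'
        · exact hshortB a' b' hB1 (Walk.start_mem_support QB) hadj' hnQB
        · exact hshortB a' b' hB1 (Walk.end_mem_support QB) hadj' hnQB
        · rcases hQBF a' hB1 with rfl | rfl | hRB'
          · exact hshortA a' b' (Walk.start_mem_support QA) hA2 hadj' hnQA
          · exact hshortA a' b' (Walk.end_mem_support QA) hA2 hadj' hnQA
          · exact hcross b' a' hRA' hRB' hadj'.symm
      · exact hshortB a' b' hB1 hB2 hadj' hnQB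
    -- now recurse on each side
    have hmain : ∀ (R : Set V) (r : V), r ∈ R →
        (∀ z, z ∈ R → z ∈ A0 ∧ RW G A0 r z) → (∀ z, z ∈ A0 → RW G A0 r z → z ∈ R) →
        (∃ c, c ∈ s ∧ c ∉ R ∧ c ∉ T) →
        ∃ x, x ∈ R ∧ SimpIn G ↑s x := by
      intro R r hrR hRsub hRsup ⟨c, hcs, hcR, hcT⟩
      set sR : Finset V := (Set.toFinite R).toFinset ∪ T with hsRdef
      have hsRmem : ∀ z, z ∈ sR ↔ z ∈ R ∨ z ∈ T := by
        intro z
        simp only [hsRdef, Finset.mem_union, Set.Finite.mem_toFinset]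
      have hsRsub : sR ⊆ s := by
        intro z hz
        rcases (hsRmem z).mp hz with h | h
        · exact (hRsub z h).1.1
        · exact hTs h
      have hcsR : c ∉ sR := fun h => ((hsRmem c).mp h).elim hcR hcT
      have hcard : sR.card < s.card :=
        Finset.card_lt_card ((Finset.ssubset_iff_of_subset hsRsub).mpr ⟨c, hcs, hcsR⟩)
      have hinside : ∀ x, x ∈ R → ∀ z, z ∈ s → G.Adj x z → z ∈ sR := by
        intro x hx z hz hadj
        by_cases hzT : z ∈ T
        · exact (hsRmem z).mpr (Or.inr hzT)
        · refine (hsRmem z).mpr (Or.inl (hRsup z ⟨hz, hzT⟩ ?_))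
          exact (hRsub x hx).2.trans (RW.adj hadj (hRsub x hx).1 ⟨hz, hzT⟩)
      rcases ih sR (by omega) with hcomp' | ⟨x1, x2, hx1, hx2, hne12, hnadj12⟩
      · refine ⟨r, hrR, (hRsub r hrR).1.1, fun x' y' hx' hy' h1 h2 hne' => ?_⟩
        exact hcomp' (hinside r hrR x' hx' h1) (hinside r hrR y' hy' h2) hne'
      · have hone : x1 ∉ T ∨ x2 ∉ T := by
          by_contra hcon
          push_neg at hcon
          exact hnadj12 (hTclique x1 x2 hcon.1 hcon.2 hne12)
        have hget : ∃ x, x ∈ R ∧ SimpIn G ↑sR x := by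
          rcases hone with h | h
          · exact ⟨x1, ((hsRmem x1).mp hx1.1).resolve_right h, hx1⟩
          · exact ⟨x2, ((hsRmem x2).mp hx2.1).resolve_right h, hx2⟩
        obtain ⟨x, hxR, hxsimp⟩ := hget
        refine ⟨x, hxR, (hRsub x hxR).1.1, fun x' y' hx' hy' h1 h2 hne' => ?_⟩
        exact hxsimp.2 (hinside x hxR x' hx' h1) (hinside x hxR y' hy' h2) h1 h2 hne'
    have hRAfacts : ∀ z, z ∈ RA → z ∈ A0 ∧ RW G A0 a z := fun z h => h
    have hRBfacts : ∀ z, z ∈ RB → z ∈ A0 ∧ RW G A0 b z := fun z h => h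
    obtain ⟨xA, hxA, hxAsimp⟩ := hmain RA a haRA hRAfacts
      (fun z hz hrw => ⟨hz, hrw⟩) ⟨b, hb, fun h => hdisj b h hbRB, hbT⟩
    obtain ⟨xB, hxB, hxBsimp⟩ := hmain RB b hbRB hRBfacts
      (fun z hz hrw => ⟨hz, hrw⟩) ⟨a, ha, fun h => hdisj a haRA h, haT⟩
    exact ⟨xA, xB, hxAsimp, hxBsimp, fun h => hdisj xA hxA (h ▸ hxB),
      fun h => hcross xA xB hxA hxB h⟩


/-! ### Two-pairs -/

/-- `x, y` form a two-pair within `s` : they are nonadjacent and every induced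
path between them inside `s` has length two. -/
def TwoPairOn (G : SimpleGraph V) (s : Set V) (x y : V) : Prop :=
  x ∈ s ∧ y ∈ s ∧ x ≠ y ∧ ¬G.Adj x y ∧
    ∀ p : G.Walk x y, p.IsPath → (∀ z ∈ p.support, z ∈ s) →
      (∀ c d, c ∈ p.support → d ∈ p.support → G.Adj c d → s(c, d) ∈ p.edges) →
      p.length = 2

/-- Splitting a walk at an interior vertex into incoming and outgoing parts. -/
lemma split_at_interior [DecidableEq V] {a b v : V} (p : G.Walk a b) (hv : v ∈ p.support)
    (hva : a ≠ v) (hvb : v ≠ b) :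
    ∃ (u1 w2 : V) (h1 : G.Adj v u1) (h2 : G.Adj v w2) (q1 : G.Walk u1 a) (q2 : G.Walk w2 b),
      Walk.cons h1 q1 = (p.takeUntil v hv).reverse ∧ Walk.cons h2 q2 = p.dropUntil v hv := by
  have hn1 : ¬(p.takeUntil v hv).reverse.Nil := Walk.not_nil_of_ne (Ne.symm hva)
  have hn2 : ¬(p.dropUntil v hv).Nil := Walk.not_nil_of_ne hvb
  exact ⟨_, _, Walk.adj_snd hn1, Walk.adj_snd hn2, _, _,
    Walk.cons_tail_eq _ hn1, Walk.cons_tail_eq _ hn2⟩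

/-- A walk within `s` between vertices distinct from a simplicial vertex `v` of `s`
can be rerouted to avoid `v`. -/
lemma avoid_simplicial [DecidableEq V] {sv : Set V} {v : V} (hsimp : SimpIn G sv v)
    {a b : V} (hav : a ≠ v) (hbv : b ≠ v) (h : RW G sv a b) : RW G (sv \ {v}) a b := by
  obtain ⟨m, hm, hmin⟩ := exists_min_walk (fun q : G.Walk a b => ∀ z ∈ q.support, z ∈ sv) h
  refine ⟨m, fun z hz => ⟨hm z hz, ?_⟩⟩
  rw [Set.mem_singleton_iff]
  rintro rfl
  -- z = v lies on the minimal walk: contradiction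
  obtain ⟨u1, w2, h1, h2, q1, q2, heq1, heq2⟩ := split_at_interior m hz hav (Ne.symm hbv)
  have hq1sub : ∀ z' ∈ q1.support, z' ∈ m.support := by
    intro z' hz'
    have hmem : z' ∈ (Walk.cons h1 q1).support := by
      rw [Walk.support_cons]; exact List.mem_cons_of_mem _ hz'
    rw [heq1, Walk.support_reverse, List.mem_reverse] at hmem
    exact Walk.support_takeUntil_subset m hz hmem
  have hq2sub : ∀ z' ∈ q2.support, z' ∈ m.support := by
    intro z' hz'
    have hmem : z' ∈ (Walk.cons h2 q2).support := by
      rw [Walk.support_cons]; exact List.mem_cons_of_mem _ hz'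
    rw [heq2] at hmem
    exact Walk.support_dropUntil_subset m hz hmem
  have hu1s : u1 ∈ sv := hm u1 (hq1sub u1 (Walk.start_mem_support q1))
  have hw2s : w2 ∈ sv := hm w2 (hq2sub w2 (Walk.start_mem_support q2))
  have hlen1 : q1.length + 1 = (m.takeUntil z hz).length := by
    have := congrArg Walk.length heq1
    rwa [Walk.length_cons, Walk.length_reverse] at this
  have hlen2 : q2.length + 1 = (m.dropUntil z hz).length := by
    have := congrArg Walk.length heq2
    rwa [Walk.length_cons] at this
  have hmlen : (m.takeUntil z hz).length + (m.dropUntil z hz).length = m.length := by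
    rw [← Walk.length_append, Walk.take_spec]
  by_cases hew : u1 = w2
  · subst hew
    have hP : ∀ z' ∈ (q1.reverse.append q2).support, z' ∈ sv := by
      intro z' hz'
      rw [Walk.support_append, List.mem_append] at hz'
      rcases hz' with hz' | hz'
      · rw [Walk.support_reverse, List.mem_reverse] at hz'
        exact hm z' (hq1sub z' hz')
      · exact hm z' (hq2sub z' (List.mem_of_mem_tail hz'))
    have := hmin _ hP
    rw [Walk.length_append, Walk.length_reverse] at this
    omega
  · have hadj12 : G.Adj u1 w2 := hsimp.2 hu1s hw2s h1 h2 hew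
    have hP : ∀ z' ∈ (q1.reverse.append (Walk.cons hadj12 q2)).support, z' ∈ sv := by
      intro z' hz'
      rw [Walk.support_append, List.mem_append] at hz'
      rcases hz' with hz' | hz'
      · rw [Walk.support_reverse, List.mem_reverse] at hz'
        exact hm z' (hq1sub z' hz')
      · rw [Walk.support_cons, List.tail_cons] at hz'
        exact hm z' (hq2sub z' hz')
    have := hmin _ hP
    rw [Walk.length_append, Walk.length_reverse, Walk.length_cons] at this
    omega

theorem exists_twopair [Fintype V] {G : SimpleGraph V} (hch : IsChordal G) :
    ∀ (n : ℕ) (s : Finset V), s.card ≤ n →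
      (∀ a b, a ∈ s → b ∈ s → RW G ↑s a b) →
      (∃ a b : V, a ∈ s ∧ b ∈ s ∧ a ≠ b ∧ ¬G.Adj a b) →
      ∃ x y, TwoPairOn G ↑s x y := by
  classical
  intro n
  induction n with
  | zero =>
    rintro s hs _ ⟨a, b, ha, -⟩
    rw [Finset.card_eq_zero.mp (Nat.le_zero.mp hs)] at ha
    simp at ha
  | succ n ih =>
    rintro s hs hconn ⟨a0, b0, ha0, hb0, hne0, hnadj0⟩
    obtain ⟨v, hvsimp⟩ : ∃ v, SimpIn G ↑s v := by
      rcases dirac hch (n + 1) s hs with hcomp | ⟨x1, _, hx1, _⟩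
      · exact ⟨a0, SimpIn.of_completeOn hcomp ha0⟩
      · exact ⟨x1, hx1⟩
    have hvs : v ∈ s := hvsimp.1
    set s' := s.erase v with hs'def
    have hs'coe : (↑s' : Set V) = ↑s \ {v} := by
      rw [hs'def, Finset.coe_erase]
    by_cases hcomp' : CompleteOn G ↑s'
    · -- all nonadjacencies involve v
      have hvpair : ∃ y, y ∈ s ∧ y ≠ v ∧ ¬G.Adj v y := by
        rcases eq_or_ne a0 v with rfl | hav
        · exact ⟨b0, hb0, fun h => hne0 h.symm, hnadj0⟩
        rcases eq_or_ne b0 v with rfl | hbv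
        · exact ⟨a0, ha0, hav, fun h => hnadj0 h.symm⟩
        · exact absurd (hcomp' (by exact Finset.mem_coe.mpr (Finset.mem_erase.mpr ⟨hav, ha0⟩))
            (Finset.mem_coe.mpr (Finset.mem_erase.mpr ⟨hbv, hb0⟩)) hne0) hnadj0
      obtain ⟨y, hys, hyv, hnadjvy⟩ := hvpair
      refine ⟨v, y, Finset.mem_coe.mpr hvs, Finset.mem_coe.mpr hys,
        fun h => hyv h.symm, hnadjvy, ?_⟩
      intro p hpath hsupp hcf
      have hvyne : v ≠ y := fun h => hyv h.symm
      have hlen2 : 2 ≤ p.length := two_le_length_of_not_adj p hvyne hnadjvy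
      by_contra hne2
      have hlen3 : 3 ≤ p.length := by omega
      have hn : ¬p.Nil := Walk.not_nil_of_ne hvyne
      obtain ⟨p1, h1, tl, heq⟩ : ∃ (p1 : V) (h1 : G.Adj v p1) (tl : G.Walk p1 y),
          Walk.cons h1 tl = p :=
        ⟨_, Walk.adj_snd hn, p.tail, Walk.cons_tail_eq p hn⟩
      have hsupp'' : p.support = v :: tl.support := by
        conv_lhs => rw [← heq]
        exact Walk.support_cons _ _
      have hnodup := hpath.support_nodup
      rw [hsupp'', List.nodup_cons] at hnodup
      have hlen'' : tl.length + 1 = p.length := by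
        have := congrArg Walk.length heq
        rwa [Walk.length_cons] at this
      have hp1y : p1 ≠ y := by
        intro hc
        have hne0' : tl.length ≠ 0 := by omega
        exact dup_support_of_eq tl hc hne0' hnodup.2
      have hp1mem : p1 ∈ tl.support := Walk.start_mem_support _
      have hp1v : p1 ≠ v := fun hc => hnodup.1 (hc ▸ hp1mem)
      have hp1s : p1 ∈ s :=
        Finset.mem_coe.mp (hsupp _ (by rw [hsupp'']; exact List.mem_cons_of_mem _ hp1mem))
      have hys'' : y ∈ (↑s' : Set V) := Finset.mem_coe.mpr (Finset.mem_erase.mpr ⟨hyv, hys⟩)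
      have hp1s' : p1 ∈ (↑s' : Set V) :=
        Finset.mem_coe.mpr (Finset.mem_erase.mpr ⟨hp1v, hp1s⟩)
      have hadjp1y : G.Adj p1 y := hcomp' hp1s' hys'' hp1y
      have hedge : s(p1, y) ∈ p.edges :=
        hcf _ y (by rw [hsupp'']; exact List.mem_cons_of_mem _ hp1mem)
          (Walk.end_mem_support p) hadjp1y
      rw [← heq, Walk.edges_cons, List.mem_cons] at hedge
      rcases hedge with hedge | hedge
      · rw [Sym2.eq_iff] at hedge
        rcases hedge with ⟨hh1, hh2⟩ | ⟨_, hh2⟩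
        · exact hp1v hh1
        · exact hyv hh2
      · obtain ⟨hadj2, r, hr, hnr⟩ := edge_head hnodup.2 hedge
        have hrlen : r.length ≠ 0 := by
          have : tl.length = r.length + 1 := by rw [hr, Walk.length_cons]
          omega
        have hnodup2 := hnodup.2
        rw [hr, Walk.support_cons, List.nodup_cons] at hnodup2
        exact dup_support_of_nonnil hrlen hnodup2.2
    · -- recurse on s' = s.erase v
      have hnc' : ∃ a b : V, a ∈ s' ∧ b ∈ s' ∧ a ≠ b ∧ ¬G.Adj a b := by
        unfold CompleteOn at hcomp'
        push_neg at hcomp'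
        obtain ⟨a, b, ha, hb, hne', hnadj'⟩ := hcomp'
        exact ⟨a, b, Finset.mem_coe.mp ha, Finset.mem_coe.mp hb, hne', hnadj'⟩
      have hcard' : s'.card ≤ n := by
        rw [hs'def, Finset.card_erase_of_mem hvs]
        omega
      have hconn' : ∀ a b, a ∈ s' → b ∈ s' → RW G ↑s' a b := by
        intro a b ha' hb'
        rw [hs'coe]
        exact avoid_simplicial hvsimp (Finset.mem_erase.mp ha').1 (Finset.mem_erase.mp hb').1
          (hconn a b (Finset.mem_of_mem_erase ha') (Finset.mem_of_mem_erase hb'))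
      obtain ⟨x, y, hx, hy, hnexy, hnadjxy, hprop⟩ := ih s' hcard' hconn' hnc'
      have hxs : x ∈ (↑s : Set V) := Finset.mem_coe.mpr
        (Finset.mem_of_mem_erase (Finset.mem_coe.mp hx))
      have hys : y ∈ (↑s : Set V) := Finset.mem_coe.mpr
        (Finset.mem_of_mem_erase (Finset.mem_coe.mp hy))
      have hxv : x ≠ v := (Finset.mem_erase.mp (Finset.mem_coe.mp hx)).1
      have hyv : y ≠ v := (Finset.mem_erase.mp (Finset.mem_coe.mp hy)).1
      refine ⟨x, y, hxs, hys, hnexy, hnadjxy, ?_⟩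
      intro p hpath hsupp hcf
      by_cases hvp : v ∈ p.support
      · exfalso
        obtain ⟨u1, w2, h1, h2, q1, q2, heq1, heq2⟩ :=
          split_at_interior p hvp hxv (Ne.symm hyv)
        have hq1sub : ∀ z' ∈ q1.support, z' ∈ (p.takeUntil v hvp).support := by
          intro z' hz'
          have hmem : z' ∈ (Walk.cons h1 q1).support := by
            rw [Walk.support_cons]; exact List.mem_cons_of_mem _ hz'
          rw [heq1, Walk.support_reverse, List.mem_reverse] at hmem
          exact hmem
        have hu1W1 : u1 ∈ (p.takeUntil v hvp).support :=
          hq1sub u1 (Walk.start_mem_support q1)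
        have hdropsupp : (p.dropUntil v hvp).support = v :: q2.support := by
          conv_lhs => rw [← heq2]
          exact Walk.support_cons _ _
        have hw2tail : w2 ∈ (p.dropUntil v hvp).support.tail := by
          rw [hdropsupp]
          exact Walk.start_mem_support q2
        have hsplit : p.support =
            (p.takeUntil v hvp).support ++ (p.dropUntil v hvp).support.tail := by
          rw [← Walk.support_append, Walk.take_spec]
        have hnodup := hpath.support_nodup
        rw [hsplit, List.nodup_append] at hnodup
        have hu1w2 : u1 ≠ w2 := fun hc => hnodup.2.2 _ hu1W1 _ hw2tail hc
        have hu1s : u1 ∈ (↑s : Set V) := hsupp u1 (by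
          rw [hsplit]; exact List.mem_append_left _ hu1W1)
        have hw2s : w2 ∈ (↑s : Set V) := hsupp w2 (by
          rw [hsplit]; exact List.mem_append_right _ hw2tail)
        have hadj12 : G.Adj u1 w2 := hvsimp.2 hu1s hw2s h1 h2 hu1w2
        have hedge : s(u1, w2) ∈ p.edges := hcf u1 w2
          (by rw [hsplit]; exact List.mem_append_left _ hu1W1)
          (by rw [hsplit]; exact List.mem_append_right _ hw2tail) hadj12
        have hesplit : p.edges = (p.takeUntil v hvp).edges ++ (p.dropUntil v hvp).edges := by
          rw [← Walk.edges_append, Walk.take_spec]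
        rw [hesplit, List.mem_append] at hedge
        rcases hedge with hedge | hedge
        · have hw2take : w2 ∈ (p.takeUntil v hvp).support :=
            Walk.snd_mem_support_of_mem_edges _ hedge
          exact hnodup.2.2 _ hw2take _ hw2tail rfl
        · have hu1drop : u1 ∈ (p.dropUntil v hvp).support :=
            Walk.fst_mem_support_of_mem_edges _ hedge
          have : u1 ∈ (p.dropUntil v hvp).support.tail := by
            rw [hdropsupp] at hu1drop ⊢
            rcases List.mem_cons.mp hu1drop with hcon | h'
            · exact absurd hcon h1.ne'
            · exact h'
          exact hnodup.2.2 _ hu1W1 _ this rfl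
      · refine hprop p hpath ?_ hcf
        intro z hz
        rw [hs'coe]
        exact ⟨hsupp z hz, fun hzv => hvp ((Set.mem_singleton_iff.mp hzv) ▸ hz)⟩


/-! ### The backward direction -/

lemma mid_of_length_two {x y : V} (p : G.Walk x y) (h : p.length = 2) :
    ∃ z, G.Adj x z ∧ G.Adj z y := by
  cases p with
  | nil => simp at h
  | cons h' q =>
    rw [Walk.length_cons] at h
    exact ⟨_, h', Walk.adj_of_mem_edges q
      (by rw [edges_of_length_one (show q.length = 1 by omega)]; simp)⟩

lemma mem_support_rotate [DecidableEq V] {v x z : V} {w : G.Walk v v}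
    (hlen : w.length ≠ 0) (hx : x ∈ w.support) :
    z ∈ (w.rotate x hx).support ↔ z ∈ w.support := by
  have hrot := Walk.support_rotate w x hx
  have hlenrot : (w.rotate x hx).length ≠ 0 := by
    have h1 : (w.rotate x hx).edges.length = w.edges.length :=
      (Walk.rotate_edges w x hx).perm.length_eq
    rw [Walk.length_edges, Walk.length_edges] at h1
    omega
  constructor
  · intro h
    exact List.mem_of_mem_tail (hrot.mem_iff.mp (mem_tail_of_closed hlenrot h))
  · intro h
    exact List.mem_of_mem_tail (hrot.mem_iff.mpr (mem_tail_of_closed hlen h))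

/-- The key step: a connected chordal graph that is not complete is obtained by an
erasure from a connected chordal graph with one more edge. -/
lemma key_step [Fintype V] {H : SimpleGraph V} (hconn : H.Connected) (hch : IsChordal H)
    (hnetop : H ≠ ⊤) :
    ∃ (G : SimpleGraph V) (x y : V), IsExposedEdge G x y ∧
      H = G.deleteEdges {s(x, y)} ∧ G.Connected ∧ IsChordal G ∧
      Gᶜ.edgeSet = Hᶜ.edgeSet \ {s(x, y)} ∧ s(x, y) ∈ Hᶜ.edgeSet := by
  classical
  -- a nonadjacent pair exists
  have hpair : ∃ a b : V, a ≠ b ∧ ¬H.Adj a b := by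
    by_contra hc
    push_neg at hc
    apply hnetop
    ext a b
    simp only [SimpleGraph.top_adj]
    exact ⟨fun h => h.ne, fun h => hc a b h⟩
  -- connectivity within univ
  have hconnuniv : ∀ a b : V, a ∈ (Finset.univ : Finset V) → b ∈ Finset.univ →
      RW H ↑(Finset.univ : Finset V) a b := by
    intro a b _ _
    obtain ⟨p⟩ := hconn.preconnected a b
    exact ⟨p, fun z _ => by simp⟩
  obtain ⟨x, y, -, -, hnexy, hnadjxy, htwopair⟩ := exists_twopair hch
    (Finset.univ : Finset V).card Finset.univ le_rfl hconnuniv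
    (by obtain ⟨a, b, h1, h2⟩ := hpair; exact ⟨a, b, by simp, by simp, h1, h2⟩)
  -- the augmented graph
  set G : SimpleGraph V := H ⊔ SimpleGraph.fromEdgeSet {s(x, y)} with hGdef
  have hGadj : ∀ a b : V, G.Adj a b ↔ H.Adj a b ∨ (s(a, b) = s(x, y) ∧ a ≠ b) := by
    intro a b
    rw [hGdef, SimpleGraph.sup_adj, SimpleGraph.fromEdgeSet_adj]
    simp
  have hGxy : G.Adj x y := (hGadj x y).mpr (Or.inr ⟨rfl, hnexy⟩)
  have hHG : H ≤ G := le_sup_left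
  have hHadjG : ∀ {a b : V}, H.Adj a b → G.Adj a b := fun h => hHG h
  have hGH : ∀ {a b : V}, G.Adj a b → s(a, b) ≠ s(x, y) → H.Adj a b := by
    intro a b h hne
    rcases (hGadj a b).mp h with h | ⟨h1, _⟩
    · exact h
    · exact absurd h1 hne
  have hnexys : ∀ {a b : V}, H.Adj a b → s(a, b) ≠ s(x, y) := by
    intro a b h hc
    rw [Sym2.eq_iff] at hc
    rcases hc with ⟨rfl, rfl⟩ | ⟨rfl, rfl⟩
    · exact hnadjxy h
    · exact hnadjxy h.symm
  have hdel : H = G.deleteEdges {s(x, y)} := by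
    ext a b
    rw [SimpleGraph.deleteEdges_adj]
    constructor
    · intro h
      exact ⟨hHadjG h, by simpa using hnexys h⟩
    · rintro ⟨hg, hne⟩
      exact hGH hg (by simpa using hne)
  -- a chord-free minimal x-y path in H has length 2 : common neighbor
  have hz0 : ∃ z0 : V, H.Adj x z0 ∧ H.Adj y z0 := by
    obtain ⟨p0⟩ := hconn.preconnected x y
    obtain ⟨m, -, hmin⟩ := exists_min_walk (fun _ : H.Walk x y => True) ⟨p0, trivial⟩
    have hpath : m.bypass.IsPath := Walk.bypass_isPath m
    have hminb : ∀ q : H.Walk x y, m.bypass.length ≤ q.length := fun q =>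
      le_trans (Walk.length_bypass_le m) (hmin q trivial)
    have hcf : ∀ c d, c ∈ m.bypass.support → d ∈ m.bypass.support → H.Adj c d →
        s(c, d) ∈ m.bypass.edges := by
      intro c d hc hd hadj
      by_contra hne
      obtain ⟨q', hlt, -, -⟩ := chord_shortcut m.bypass hadj hc hd hne
      exact absurd (hminb q') (by omega)
    have hlen : m.bypass.length = 2 := htwopair m.bypass hpath (fun z _ => by simp) hcf
    obtain ⟨z0, h1, h2⟩ := mid_of_length_two m.bypass hlen
    exact ⟨z0, h1, h2.symm⟩
  obtain ⟨z0, hxz0, hyz0⟩ := hz0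
  -- the common neighborhood is a clique
  have hNclique : ∀ u w : V, H.Adj x u → H.Adj y u → H.Adj x w → H.Adj y w → u ≠ w →
      H.Adj u w := by
    intro u w hxu hyu hxw hyw hneuw
    by_contra hnadj
    set C : H.Walk x x :=
      Walk.cons hxu (Walk.cons hyu.symm (Walk.cons hyw (Walk.cons hxw.symm Walk.nil)))
      with hCdef
    have hCsupp : C.support = [x, u, y, w, x] := by rw [hCdef]; rfl
    have hCedges : C.edges = [s(x, u), s(u, y), s(y, w), s(w, x)] := by rw [hCdef]; rfl
    have hCcyc : C.IsCycle := by
      rw [Walk.isCycle_def, Walk.isTrail_def, hCedges]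
      refine ⟨?_, by rw [hCdef]; simp, ?_⟩
      · have e12 : s(x, u) ≠ s(u, y) := by
          intro hc; rw [Sym2.eq_iff] at hc
          rcases hc with ⟨h1, -⟩ | ⟨h1, -⟩
          · exact hxu.ne h1
          · exact hnexy h1
        have e13 : s(x, u) ≠ s(y, w) := by
          intro hc; rw [Sym2.eq_iff] at hc
          rcases hc with ⟨h1, -⟩ | ⟨-, h2⟩
          · exact hnexy h1
          · exact hyu.ne' h2
        have e14 : s(x, u) ≠ s(w, x) := by
          intro hc; rw [Sym2.eq_iff] at hc
          rcases hc with ⟨-, h2⟩ | ⟨-, h2⟩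
          · exact hxu.ne' h2
          · exact hneuw h2
        have e23 : s(u, y) ≠ s(y, w) := by
          intro hc; rw [Sym2.eq_iff] at hc
          rcases hc with ⟨h1, -⟩ | ⟨h1, -⟩
          · exact hyu.ne' h1
          · exact hneuw h1
        have e24 : s(u, y) ≠ s(w, x) := by
          intro hc; rw [Sym2.eq_iff] at hc
          rcases hc with ⟨-, h2⟩ | ⟨h1, -⟩
          · exact hnexy h2.symm
          · exact hxu.ne' h1
        have e34 : s(y, w) ≠ s(w, x) := by
          intro hc; rw [Sym2.eq_iff] at hc
          rcases hc with ⟨h1, -⟩ | ⟨h1, -⟩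
          · exact hyw.ne h1
          · exact hnexy h1.symm
        simp [e12, e13, e14, e23, e24, e34]
      · have htail : C.support.tail = [u, y, w, x] := by rw [hCsupp]; rfl
        have n1 : u ≠ y := hyu.ne'
        have n3 : u ≠ x := hxu.ne'
        have n4 : y ≠ w := hyw.ne
        have n5 : y ≠ x := fun hc => hnexy hc.symm
        have n6 : w ≠ x := hxw.ne'
        rw [htail]
        simp [n1, hneuw, n3, n4, n5, n6]
    obtain ⟨c, d, hc, hd, hadj', hne'⟩ := hch C hCcyc (by rw [hCdef]; rfl)
    rw [hCsupp] at hc hd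
    rw [hCedges] at hne'
    simp only [List.mem_cons, List.not_mem_nil, or_false, List.mem_singleton] at hc hd
    rcases hc with rfl | rfl | rfl | rfl | rfl <;> rcases hd with rfl | rfl | rfl | rfl | rfl <;>
      first
        | exact hadj'.ne rfl
        | exact hnadjxy hadj'
        | exact hnadjxy hadj'.symm
        | exact hnadj hadj'
        | exact hnadj hadj'.symm
        | exact hne' (by simp)
        | exact hne' (by rw [Sym2.eq_swap]; simp)
  -- the unique maximal clique containing x and y in G
  set N : Set V := {z | H.Adj x z ∧ H.Adj y z} with hNdef
  set S : Set V := {x, y} ∪ N with hSdef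
  have hSmem : ∀ z, z ∈ S ↔ z = x ∨ z = y ∨ (H.Adj x z ∧ H.Adj y z) := by
    intro z
    simp only [hSdef, hNdef, Set.mem_union, Set.mem_insert_iff, Set.mem_singleton_iff,
      Set.mem_setOf_eq]
    tauto
  have hxS : x ∈ S := (hSmem x).mpr (Or.inl rfl)
  have hyS : y ∈ S := (hSmem y).mpr (Or.inr (Or.inl rfl))
  have hz0S : z0 ∈ S := (hSmem z0).mpr (Or.inr (Or.inr ⟨hxz0, hyz0⟩))
  have hSclique : G.IsClique S := by
    intro c hc d hd hne
    rw [hSmem] at hc hd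
    rcases hc with rfl | rfl | hc <;> rcases hd with rfl | rfl | hd
    · exact absurd rfl hne
    · exact hGxy
    · exact hHadjG hd.1
    · exact hGxy.symm
    · exact absurd rfl hne
    · exact hHadjG hd.2
    · exact hHadjG hc.1.symm
    · exact hHadjG hc.2.symm
    · exact hHadjG (hNclique c d hc.1 hc.2 hd.1 hd.2 hne)
  have hsubS : ∀ t : Set V, G.IsClique t → x ∈ t → y ∈ t → t ⊆ S := by
    intro t ht hxt hyt w hw
    rw [hSmem]
    rcases eq_or_ne w x with rfl | hwx
    · exact Or.inl rfl
    rcases eq_or_ne w y with rfl | hwy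
    · exact Or.inr (Or.inl rfl)
    refine Or.inr (Or.inr ⟨?_, ?_⟩)
    · refine hGH (ht hxt hw (Ne.symm hwx)) ?_
      intro hc
      rw [Sym2.eq_iff] at hc
      rcases hc with ⟨-, h2⟩ | ⟨h1, -⟩
      · exact hwy h2
      · exact hnexy h1
    · refine hGH (ht hyt hw (Ne.symm hwy)) ?_
      intro hc
      rw [Sym2.eq_iff] at hc
      rcases hc with ⟨h1, h2⟩ | ⟨-, h2⟩
      · exact hnexy h1.symm
      · exact hwx h2
  have hSmax : IsMaxClique G S :=
    ⟨hSclique, fun t ht hst =>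
      Set.Subset.antisymm (hsubS t ht (hst hxS) (hst hyS)) hst⟩
  have hexp : IsExposedEdge G x y := by
    refine ⟨hGxy, ⟨S, ⟨hSmax, hxS, hyS⟩, ?_⟩, ?_⟩
    · rintro t ⟨htmax, hxt, hyt⟩
      exact (htmax.2 S hSclique (hsubS t htmax.1 hxt hyt)).symm
    · rintro ⟨-, hmax⟩
      have hsub : ({x, y} : Set V) ⊆ S := by
        intro z hz
        rcases hz with rfl | hz
        · exact hxS
        · rw [Set.mem_singleton_iff] at hz
          exact hz ▸ hyS
      have hSxy := hmax.2 S hSclique hsub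
      rw [hSxy] at hz0S
      rcases hz0S with h | h
      · exact hxz0.ne' h
      · rw [Set.mem_singleton_iff] at h
        exact hyz0.ne' h
  -- G is chordal
  have hGch : IsChordal G := by
    intro v w hw hlen4
    by_cases hxyw : s(x, y) ∈ w.edges
    · have hxw : x ∈ w.support := Walk.fst_mem_support_of_mem_edges w hxyw
      have hwlen0 : w.length ≠ 0 := by omega
      have hrotE : (w.rotate x hxw).edges ~r w.edges := Walk.rotate_edges w x hxw
      have hxyrot : s(x, y) ∈ (w.rotate x hxw).edges := hrotE.mem_iff.mpr hxyw
      obtain ⟨q, hqpath, hqxy, hqlen, hqsupp, hqedges⟩ :=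
        cycle_edge_split (w.rotate x hxw) (hw.rotate hxw) hxyrot
      have hrotlen : (w.rotate x hxw).length = w.length := by
        have := hrotE.perm.length_eq
        rwa [Walk.length_edges, Walk.length_edges] at this
      have hqlen3 : 3 ≤ q.length := by omega
      have hqH : ∀ e ∈ q.edges, e ∈ H.edgeSet := by
        intro e he
        have hG : e ∈ G.edgeSet := q.edges_subset_edgeSet he
        have hne'' : e ≠ s(x, y) := fun hc => hqxy (hc ▸ he)
        revert hG hne''
        refine Sym2.ind (fun c d => ?_) e
        intro hG hne''
        rw [SimpleGraph.mem_edgeSet] at hG ⊢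
        exact hGH hG hne''
      have hqHsupp : (q.transfer H hqH).support = q.support := Walk.support_transfer _ _
      have hqHedges : (q.transfer H hqH).edges = q.edges := Walk.edges_transfer _ _
      have hqHpath : (q.transfer H hqH).IsPath := by
        rw [Walk.isPath_def, hqHsupp]
        exact hqpath.support_nodup
      have hncf : ¬(∀ c d, c ∈ (q.transfer H hqH).support → d ∈ (q.transfer H hqH).support →
          H.Adj c d → s(c, d) ∈ (q.transfer H hqH).edges) := by
        intro hcf
        have := htwopair (q.transfer H hqH) hqHpath (fun z _ => by simp) hcf
        rw [Walk.length_transfer] at this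
        omega
      push_neg at hncf
      obtain ⟨c, d, hc, hd, hadjcd, hnein⟩ := hncf
      refine ⟨c, d, ?_, ?_, hHadjG hadjcd, ?_⟩
      · rw [hqHsupp] at hc
        exact (mem_support_rotate hwlen0 hxw).mp (hqsupp c hc)
      · rw [hqHsupp] at hd
        exact (mem_support_rotate hwlen0 hxw).mp (hqsupp d hd)
      · intro hcon
        have hrotmem : s(c, d) ∈ (w.rotate x hxw).edges := hrotE.mem_iff.mpr hcon
        rcases hqedges _ hrotmem with h | h
        · exact hnexys hadjcd h
        · rw [hqHedges] at hnein
          exact hnein h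
    · have hsubH : ∀ e ∈ w.edges, e ∈ H.edgeSet := by
        intro e he
        have hG : e ∈ G.edgeSet := w.edges_subset_edgeSet he
        have hne'' : e ≠ s(x, y) := fun hc => hxyw (hc ▸ he)
        revert hG hne''
        refine Sym2.ind (fun c d => ?_) e
        intro hG hne''
        rw [SimpleGraph.mem_edgeSet] at hG ⊢
        exact hGH hG hne''
      have hcyc : (w.transfer H hsubH).IsCycle := isCycle_transfer _ hw
      obtain ⟨c, d, hc, hd, hadjcd, hne'⟩ := hch (w.transfer H hsubH) hcyc
        (by rw [Walk.length_transfer]; exact hlen4)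
      rw [Walk.support_transfer] at hc hd
      rw [Walk.edges_transfer] at hne'
      exact ⟨c, d, hc, hd, hHadjG hadjcd, hne'⟩
  -- complement edge sets
  have hcompl : Gᶜ.edgeSet = Hᶜ.edgeSet \ {s(x, y)} := by
    ext e
    refine Sym2.ind (fun a b => ?_) e
    simp only [SimpleGraph.mem_edgeSet, Set.mem_diff, Set.mem_singleton_iff,
      SimpleGraph.compl_adj]
    constructor
    · rintro ⟨hne, hnadj⟩
      refine ⟨⟨hne, fun h => hnadj (hHadjG h)⟩, ?_⟩
      intro hc
      exact hnadj ((hGadj a b).mpr (Or.inr ⟨hc, hne⟩))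
    · rintro ⟨⟨hne, hnadj⟩, hnec⟩
      refine ⟨hne, fun h => ?_⟩
      rcases (hGadj a b).mp h with h | ⟨h1, -⟩
      · exact hnadj h
      · exact hnec h1
  have hxyC : s(x, y) ∈ Hᶜ.edgeSet := by
    rw [SimpleGraph.mem_edgeSet, SimpleGraph.compl_adj]
    exact ⟨hnexy, hnadjxy⟩
  exact ⟨G, x, y, hexp, hdel, hconn.mono hHG, hGch, hcompl, hxyC⟩

lemma backward_direction [Fintype V] [Nonempty V] :
    ∀ (k : ℕ) (H : SimpleGraph V), Hᶜ.edgeSet.ncard ≤ k → H.Connected → IsChordal H →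
      Relation.ReflTransGen Erasure (⊤ : SimpleGraph V) H := by
  classical
  intro k
  induction k with
  | zero =>
    intro H hk hconn hch
    have h0 : Hᶜ.edgeSet = ∅ :=
      (Set.ncard_eq_zero (Set.toFinite _)).mp (Nat.le_zero.mp hk)
    have htop : H = ⊤ := by
      ext a b
      simp only [SimpleGraph.top_adj]
      constructor
      · exact fun h => h.ne
      · intro hne
        by_contra hnadj
        have hmem : s(a, b) ∈ Hᶜ.edgeSet := by
          rw [SimpleGraph.mem_edgeSet, SimpleGraph.compl_adj]
          exact ⟨hne, hnadj⟩
        rw [h0] at hmem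
        exact hmem
    rw [htop]
  | succ k ih =>
    intro H hk hconn hch
    by_cases htop : H = ⊤
    · rw [htop]
    obtain ⟨G, x, y, hexp, hdel, hGconn, hGch, hcompl, hxyC⟩ := key_step hconn hch htop
    have hlt : Gᶜ.edgeSet.ncard < Hᶜ.edgeSet.ncard := by
      rw [hcompl]
      exact Set.ncard_diff_singleton_lt_of_mem hxyC (Set.toFinite _)
    exact (ih G (by omega) hGconn hGch).tail ⟨x, y, hexp, hdel⟩

end ErasureAux


/-- A graph on a nonempty finite vertex set can be obtained from the complete graph
through a finite sequence of erasures if and only if it is connected and chordal. -/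
theorem erasure_sequence_iff_connected_chordal [Fintype V] [Nonempty V]
    (H : SimpleGraph V) :
    Relation.ReflTransGen Erasure (⊤ : SimpleGraph V) H ↔
      (H.Connected ∧ IsChordal H) := by
  constructor
  · exact fun h => ErasureAux.forward_direction h
  · intro ⟨hconn, hch⟩
    exact ErasureAux.backward_direction _ H le_rfl hconn hch
end
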